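/- arXiv:math/0408221 — 8 statements merged into one kernel-verified Lean document; each statement's English description precedes it below -/
import Mathlib

section
/- Let N be an odd positive integer, k an integer, ε ∈ {1, −1}, a₂ ∈ ℂ, and f : ℍ → ℂ. Assume: (i) f ∣[k] T = f; (ii) f ∣[k] H_N = ε • f; (iii) f ∣[k] [[2,0],[0,1]] + f ∣[k] [[1,0],[0,2]] + f ∣[k] [[1,1],[0,2]] = a₂ • f; and (iv) the pairing hypothesis for f (encoding Pairing Assumptions 1 and 2). Then f ∣[k] γ = f for every γ ∈ G_{0,2}(N). -/
open Matrix UpperHalfPlane Complex CongruenceSubgroup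
open scoped ModularForm MatrixGroups

/-- The element of `GL(2, ℝ)⁺` with entries `[[a, b], [c, d]]` and positive determinant. -/
noncomputable def glp (a b c d : ℝ) (h : 0 < a * d - b * c) : GL(2, ℝ)⁺ :=
  ⟨Matrix.GeneralLinearGroup.mkOfDetNeZero !![a, b; c, d]
      (by rw [Matrix.det_fin_two_of]; exact ne_of_gt h),
   by
    rw [Matrix.mem_glpos]
    show (0:ℝ) < ((Matrix.GeneralLinearGroup.det _ : ℝˣ) : ℝ)
    rw [Matrix.GeneralLinearGroup.val_det_apply]
    show (0:ℝ) < Matrix.det !![a, b; c, d]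
    rw [Matrix.det_fin_two_of]; exact h⟩

lemma det_pos_of_eq_one {a b c d : ℝ} (h : a * d - b * c = 1) : 0 < a * d - b * c := by
  rw [h]; norm_num

/-- The pairing hypothesis, encoding Pairing Assumptions 1 and 2: for each admissible
`n, α, β`, invariance of `f` under `[[2^n, α],[βN, (αβN+1)/2^n]]` yields invariance under both
matrices of the integer pair (`P₁` when `2^(n+1) ∣ αβN+1`, and `P₂` otherwise). -/
def PairingHyp (N : ℕ) (k : ℤ) (f : ℍ → ℂ) : Prop :=
  ∀ (n : ℕ) (α β : ℤ), 1 ≤ n → Odd α → Odd β → ((2:ℤ)^n) ∣ α * β * N + 1 →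
    2 * |α| ≤ 2^n → 2 * |β| ≤ 2^n →
    f ∣[k] (glp ((2:ℝ)^n) (α:ℝ) ((β:ℝ)*(N:ℝ)) (((α:ℝ)*(β:ℝ)*(N:ℝ)+1)/(2:ℝ)^n)
        (det_pos_of_eq_one (by
          have hne : ((2:ℝ)^n) ≠ 0 := by positivity
          field_simp; ring)) : GL (Fin 2) ℝ) = f →
    ((((2:ℤ)^(n+1)) ∣ α * β * N + 1 →
      f ∣[k] (glp ((2:ℝ)^(n+1)) (α:ℝ) ((β:ℝ)*(N:ℝ)) (((α:ℝ)*(β:ℝ)*(N:ℝ)+1)/(2:ℝ)^(n+1))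
          (det_pos_of_eq_one (by
            have hne : ((2:ℝ)^(n+1)) ≠ 0 := by positivity
            field_simp; ring)) : GL (Fin 2) ℝ) = f ∧
      f ∣[k] (glp ((2:ℝ)^(n+1)) ((α:ℝ)-(2:ℝ)^n) (((β:ℝ)-(2:ℝ)^n)*(N:ℝ))
          ((((α:ℝ)-(2:ℝ)^n)*((β:ℝ)-(2:ℝ)^n)*(N:ℝ)+1)/(2:ℝ)^(n+1))
          (det_pos_of_eq_one (by
            have hne : ((2:ℝ)^(n+1)) ≠ 0 := by positivity
            field_simp; ring)) : GL (Fin 2) ℝ) = f) ∧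
     (¬ ((2:ℤ)^(n+1)) ∣ α * β * N + 1 →
      f ∣[k] (glp ((2:ℝ)^(n+1)) ((α:ℝ)-(2:ℝ)^n) ((β:ℝ)*(N:ℝ))
          ((((α:ℝ)-(2:ℝ)^n)*(β:ℝ)*(N:ℝ)+1)/(2:ℝ)^(n+1))
          (det_pos_of_eq_one (by
            have hne : ((2:ℝ)^(n+1)) ≠ 0 := by positivity
            field_simp; ring)) : GL (Fin 2) ℝ) = f ∧
      f ∣[k] (glp ((2:ℝ)^(n+1)) (α:ℝ) (((β:ℝ)-(2:ℝ)^n)*(N:ℝ))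
          (((α:ℝ)*((β:ℝ)-(2:ℝ)^n)*(N:ℝ)+1)/(2:ℝ)^(n+1))
          (det_pos_of_eq_one (by
            have hne : ((2:ℝ)^(n+1)) ≠ 0 := by positivity
            field_simp; ring)) : GL (Fin 2) ℝ) = f))

/-- `G_{0,2}(N)`: matrices in `Γ₀(N)` whose upper-left entry is a power of `2`. -/
def G02 (N : ℕ) : Set SL(2, ℤ) :=
  {γ | γ ∈ Gamma0 N ∧ ∃ n : ℕ, (γ : Matrix (Fin 2) (Fin 2) ℤ) 0 0 = 2^n}


namespace G02aux

lemma glp_mul (a b c d a' b' c' d' : ℝ) (h : 0 < a * d - b * c) (h' : 0 < a' * d' - b' * c')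
    (h'' : 0 < (a*a'+b*c') * (c*b'+d*d') - (a*b'+b*d') * (c*a'+d*c')) :
    glp a b c d h * glp a' b' c' d' h'
      = glp (a*a'+b*c') (a*b'+b*d') (c*a'+d*c') (c*b'+d*d') h'' := by
  apply Subtype.ext; apply Units.ext
  show (!![a,b;c,d] : Matrix (Fin 2) (Fin 2) ℝ) * !![a',b';c',d'] = _
  rw [Matrix.mul_fin_two]; rfl

lemma glp_one : glp 1 0 0 1 (by norm_num) = 1 := by
  apply Subtype.ext; apply Units.ext
  show (!![(1:ℝ),0;0,1] : Matrix (Fin 2) (Fin 2) ℝ) = (1 : Matrix (Fin 2) (Fin 2) ℝ)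
  simp [← Matrix.one_fin_two]

lemma glp_congr {a b c d a' b' c' d' : ℝ} {h : 0 < a * d - b * c} {h' : 0 < a' * d' - b' * c'}
    (ha : a = a') (hb : b = b') (hc : c = c') (hd : d = d') :
    glp a b c d h = glp a' b' c' d' h' := by subst ha hb hc hd; rfl

lemma slash_glp_mul (k : ℤ) (f : ℍ → ℂ) (a b c d a' b' c' d' a'' b'' c'' d'' : ℝ)
    (h : 0 < a*d-b*c) (h' : 0 < a'*d'-b'*c') (h'' : 0 < a''*d''-b''*c'')
    (h1 : a'' = a*a'+b*c') (h2 : b'' = a*b'+b*d') (h3 : c'' = c*a'+d*c') (h4 : d'' = c*b'+d*d') :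
    f ∣[k] (glp a'' b'' c'' d'' h'' : GL (Fin 2) ℝ) = (f ∣[k] (glp a b c d h : GL (Fin 2) ℝ)) ∣[k] (glp a' b' c' d' h' : GL (Fin 2) ℝ) := by
  subst h1 h2 h3 h4
  rw [← glp_mul a b c d a' b' c' d' h h' h'', Subgroup.coe_mul, SlashAction.slash_mul]

lemma smul_slash_glp (k : ℤ) (f : ℍ → ℂ) (c : ℂ) (g : GL(2, ℝ)⁺) :
    (c • f) ∣[k] (g : GL (Fin 2) ℝ) = c • f ∣[k] (g : GL (Fin 2) ℝ) := by
  have hg : 0 < ((g : GL (Fin 2) ℝ).det : ℝ) := g.2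
  rw [ModularForm.smul_slash, UpperHalfPlane.σ, if_pos hg]
  rfl

/-- invariance under integer powers of T -/
lemma T_pow {k : ℤ} {f : ℍ → ℂ}
    (hT : f ∣[k] (glp 1 1 0 1 (by norm_num) : GL (Fin 2) ℝ) = f) (m : ℤ) :
    f ∣[k] (glp 1 (m:ℝ) 0 1 (by norm_num) : GL (Fin 2) ℝ) = f := by
  induction m using Int.induction_on with
  | zero =>
      rw [show glp 1 ((0:ℤ):ℝ) 0 1 (by norm_num) = 1 from (glp_congr rfl (by norm_num) rfl rfl).trans glp_one]
      exact SlashAction.slash_one k f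
  | succ i ih =>
      rw [slash_glp_mul k f 1 (((i:ℤ)):ℝ) 0 1 1 1 0 1 1 ((i:ℤ)+1 : ℤ) 0 1 (by norm_num) (by norm_num)
        (by norm_num) (by ring) (by push_cast; ring) (by ring) (by ring), ih, hT]
  | pred i ih =>
      rw [slash_glp_mul k f 1 (((-i:ℤ)):ℝ) 0 1 1 (-1) 0 1 1 (-(i:ℤ)-1 : ℤ) 0 1 (by norm_num) (by norm_num)
        (by norm_num) (by ring) (by push_cast; ring) (by ring) (by ring)]
      · rw [ih]
        -- f ∣ T⁻¹ = f : from hT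
        have h1 : f ∣[k] ((glp 1 1 0 1 (by norm_num) * glp 1 (-1) 0 1 (by norm_num) : GL(2, ℝ)⁺) : GL (Fin 2) ℝ) = f := by
          rw [glp_mul 1 1 0 1 1 (-1) 0 1 (by norm_num) (by norm_num) (by norm_num)]
          rw [show glp (1*1+1*0) (1*(-1)+1*1) (0*1+1*0) (0*(-1)+1*1) (by norm_num) = 1 from
            (glp_congr (by norm_num) (by norm_num) (by norm_num) (by norm_num)).trans glp_one]
          exact SlashAction.slash_one k f
        rw [Subgroup.coe_mul, SlashAction.slash_mul, hT] at h1
        exact h1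


/-- invariance under integer powers of W = [[1,0],[N,1]] -/
lemma W_pow {N : ℕ} {k : ℤ} {f : ℍ → ℂ} {ε : ℂ} (hN : (0:ℝ) < N) (hε0 : ε ≠ 0)
    (hT : f ∣[k] (glp 1 1 0 1 (by norm_num) : GL (Fin 2) ℝ) = f)
    (hH : f ∣[k] (glp 0 (-1) (N:ℝ) 0 (by simpa using hN) : GL (Fin 2) ℝ) = ε • f) (m : ℤ) :
    f ∣[k] (glp 1 0 ((m:ℝ)*(N:ℝ)) 1 (by norm_num) : GL (Fin 2) ℝ) = f := by
  have hdet : (0:ℝ) < (-(m:ℝ)*N) * 0 - (-1) * N := by simpa using hN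
  have e1 : f ∣[k] (glp (-(m:ℝ)*N) (-1) (N:ℝ) 0 hdet : GL (Fin 2) ℝ)
      = (f ∣[k] (glp 0 (-1) (N:ℝ) 0 (by simpa using hN) : GL (Fin 2) ℝ)) ∣[k] (glp 1 0 ((m:ℝ)*(N:ℝ)) 1 (by norm_num) : GL (Fin 2) ℝ) :=
    slash_glp_mul k f 0 (-1) (N:ℝ) 0 1 0 ((m:ℝ)*(N:ℝ)) 1 _ _ _ _
      (by simpa using hN) (by norm_num) hdet (by ring) (by ring) (by ring) (by ring)
  have e2 : f ∣[k] (glp (-(m:ℝ)*N) (-1) (N:ℝ) 0 hdet : GL (Fin 2) ℝ)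
      = (f ∣[k] (glp 1 ((-m : ℤ):ℝ) 0 1 (by norm_num) : GL (Fin 2) ℝ)) ∣[k] (glp 0 (-1) (N:ℝ) 0 (by simpa using hN) : GL (Fin 2) ℝ) :=
    slash_glp_mul k f 1 ((-m : ℤ):ℝ) 0 1 0 (-1) (N:ℝ) 0 _ _ _ _
      (by norm_num) (by simpa using hN) hdet (by push_cast; ring) (by push_cast; ring)
      (by push_cast; ring) (by push_cast; ring)
  rw [T_pow hT (-m), hH] at e2
  rw [hH, smul_slash_glp] at e1
  have : ε • (f ∣[k] (glp 1 0 ((m:ℝ)*(N:ℝ)) 1 (by norm_num) : GL (Fin 2) ℝ)) = ε • f := by rw [← e1, e2]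
  exact smul_right_injective (ℍ → ℂ) hε0 this

/-- the key invariance property -/
def QQ (N : ℕ) (k : ℤ) (f : ℍ → ℂ) (n : ℕ) (α β : ℤ) : Prop :=
  f ∣[k] (glp ((2:ℝ)^n) (α:ℝ) ((β:ℝ)*(N:ℝ)) (((α:ℝ)*(β:ℝ)*(N:ℝ)+1)/(2:ℝ)^n)
      (det_pos_of_eq_one (by
        have hne : ((2:ℝ)^n) ≠ 0 := by positivity
        field_simp; ring)) : GL (Fin 2) ℝ) = f

lemma toQQ (N : ℕ) (k : ℤ) (f : ℍ → ℂ) (m : ℕ) (α β : ℤ) (a b c d : ℝ) (h : 0 < a*d-b*c)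
    (ha : a = 2^m) (hb : b = α) (hc : c = (β:ℝ)*(N:ℝ)) (hd : d = ((α:ℝ)*(β:ℝ)*(N:ℝ)+1)/(2:ℝ)^m)
    (hf : f ∣[k] (glp a b c d h : GL (Fin 2) ℝ) = f) : QQ N k f m α β := by
  subst ha hb hc hd; exact hf

lemma ofQQ (N : ℕ) (k : ℤ) (f : ℍ → ℂ) (m : ℕ) (α β : ℤ) (a b c d : ℝ) (h : 0 < a*d-b*c)
    (ha : a = 2^m) (hb : b = α) (hc : c = (β:ℝ)*(N:ℝ)) (hd : d = ((α:ℝ)*(β:ℝ)*(N:ℝ)+1)/(2:ℝ)^m)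
    (hq : QQ N k f m α β) : f ∣[k] (glp a b c d h : GL (Fin 2) ℝ) = f := by
  subst ha hb hc hd; exact hq

lemma QQ_shift_T {N : ℕ} {k : ℤ} {f : ℍ → ℂ} {n : ℕ} {α β : ℤ}
    (hT : f ∣[k] (glp 1 1 0 1 (by norm_num) : GL (Fin 2) ℝ) = f) (m : ℤ)
    (hq : QQ N k f n α β) : QQ N k f n (α + 2^n * m) β := by
  have hne : ((2:ℝ)^n) ≠ 0 := by positivity
  unfold QQ at hq ⊢
  rw [slash_glp_mul k f ((2:ℝ)^n) (α:ℝ) ((β:ℝ)*(N:ℝ)) (((α:ℝ)*(β:ℝ)*(N:ℝ)+1)/(2:ℝ)^n)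
      1 (m:ℝ) 0 1 _ _ _ _
      (det_pos_of_eq_one (by field_simp; ring)) (by norm_num)
      (det_pos_of_eq_one (by field_simp; ring))
      (by ring) (by push_cast; ring) (by ring) (by push_cast; field_simp; ring),
    hq, T_pow hT m]

lemma QQ_shift_W {N : ℕ} {k : ℤ} {f : ℍ → ℂ} {ε : ℂ} {n : ℕ} {α β : ℤ}
    (hN : (0:ℝ) < N) (hε0 : ε ≠ 0)
    (hT : f ∣[k] (glp 1 1 0 1 (by norm_num) : GL (Fin 2) ℝ) = f)
    (hH : f ∣[k] (glp 0 (-1) (N:ℝ) 0 (by simpa using hN) : GL (Fin 2) ℝ) = ε • f) (m : ℤ)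
    (hq : QQ N k f n α β) : QQ N k f n α (β + 2^n * m) := by
  have hne : ((2:ℝ)^n) ≠ 0 := by positivity
  unfold QQ at hq ⊢
  rw [slash_glp_mul k f 1 0 ((m:ℝ)*(N:ℝ)) 1
      ((2:ℝ)^n) (α:ℝ) ((β:ℝ)*(N:ℝ)) (((α:ℝ)*(β:ℝ)*(N:ℝ)+1)/(2:ℝ)^n) _ _ _ _
      (by norm_num) (det_pos_of_eq_one (by field_simp; ring))
      (det_pos_of_eq_one (by field_simp; ring))
      (by ring) (by push_cast; ring) (by push_cast; ring) (by push_cast; field_simp; ring),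
    W_pow hN hε0 hT hH m, hq]

lemma QQ_cong {N : ℕ} {k : ℤ} {f : ℍ → ℂ} {ε : ℂ} {n : ℕ} {α β α' β' : ℤ}
    (hN : (0:ℝ) < N) (hε0 : ε ≠ 0)
    (hT : f ∣[k] (glp 1 1 0 1 (by norm_num) : GL (Fin 2) ℝ) = f)
    (hH : f ∣[k] (glp 0 (-1) (N:ℝ) 0 (by simpa using hN) : GL (Fin 2) ℝ) = ε • f)
    (hα : (2:ℤ)^n ∣ α' - α) (hβ : (2:ℤ)^n ∣ β' - β)
    (hq : QQ N k f n α β) : QQ N k f n α' β' := by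
  obtain ⟨s, hs⟩ := hα
  obtain ⟨t, ht⟩ := hβ
  have hα' : α' = α + 2^n * s := by linarith
  have hβ' : β' = β + 2^n * t := by linarith
  subst hα' hβ'
  exact QQ_shift_W hN hε0 hT hH t (QQ_shift_T hT s hq)

lemma QQ_zero {N : ℕ} {k : ℤ} {f : ℍ → ℂ} {ε : ℂ}
    (hN : (0:ℝ) < N) (hε0 : ε ≠ 0)
    (hT : f ∣[k] (glp 1 1 0 1 (by norm_num) : GL (Fin 2) ℝ) = f)
    (hH : f ∣[k] (glp 0 (-1) (N:ℝ) 0 (by simpa using hN) : GL (Fin 2) ℝ) = ε • f) (b c : ℤ) :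
    QQ N k f 0 b c := by
  unfold QQ
  rw [slash_glp_mul k f 1 0 ((c:ℝ)*(N:ℝ)) 1 1 (b:ℝ) 0 1 _ _ _ _
      (by norm_num) (by norm_num)
      (det_pos_of_eq_one (by push_cast; ring))
      (by norm_num) (by norm_num) (by ring) (by push_cast; ring),
    W_pow hN hε0 hT hH c, T_pow hT b]


/-- base case: QQ N k f 1 (-1) (-1) -/
lemma QQ_base {N : ℕ} {k : ℤ} {f : ℍ → ℂ} {ε : ℂ} {a₂ : ℂ}
    (hN : (0:ℝ) < N) (hε0 : ε ≠ 0)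
    (hH : f ∣[k] (glp 0 (-1) (N:ℝ) 0 (by simpa using hN) : GL (Fin 2) ℝ) = ε • f)
    (hT2 : f ∣[k] (glp 2 0 0 1 (by norm_num) : GL (Fin 2) ℝ) + f ∣[k] (glp 1 0 0 2 (by norm_num) : GL (Fin 2) ℝ)
        + f ∣[k] (glp 1 1 0 2 (by norm_num) : GL (Fin 2) ℝ) = a₂ • f) :
    QQ N k f 1 (-1) (-1) := by
  have hdN : (0:ℝ) < (0:ℝ)*0 - (-1)*(N:ℝ) := by simpa using hN
  set H : GL(2,ℝ)⁺ := glp 0 (-1) (N:ℝ) 0 hdN with hHdef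
  have hd2N : (0:ℝ) < (0:ℝ)*0 - (-2)*(N:ℝ) := by simpa using hN
  have hd2N' : (0:ℝ) < (0:ℝ)*0 - (-1)*(2*(N:ℝ)) := by simpa using hN
  have hdNm : (0:ℝ) < (N:ℝ)*0 - (-1)*(2*(N:ℝ)) := by simpa using hN
  have hdB : (0:ℝ) < (2:ℝ)*1 - 0*(-(N:ℝ)) := by norm_num
  -- conjugation identities
  have e1 : f ∣[k] (glp 0 (-2) (N:ℝ) 0 hd2N : GL (Fin 2) ℝ) = (f ∣[k] (glp 2 0 0 1 (by norm_num) : GL (Fin 2) ℝ)) ∣[k] (H : GL (Fin 2) ℝ) :=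
    slash_glp_mul k f 2 0 0 1 0 (-1) (N:ℝ) 0 _ _ _ _ (by norm_num) hdN hd2N
      (by ring) (by ring) (by ring) (by ring)
  have e1' : f ∣[k] (glp 0 (-2) (N:ℝ) 0 hd2N : GL (Fin 2) ℝ) = (f ∣[k] (H : GL (Fin 2) ℝ)) ∣[k] (glp 1 0 0 2 (by norm_num) : GL (Fin 2) ℝ) :=
    slash_glp_mul k f 0 (-1) (N:ℝ) 0 1 0 0 2 _ _ _ _ hdN (by norm_num) hd2N
      (by ring) (by ring) (by ring) (by ring)
  have e2 : f ∣[k] (glp 0 (-1) (2*(N:ℝ)) 0 hd2N' : GL (Fin 2) ℝ) = (f ∣[k] (glp 1 0 0 2 (by norm_num) : GL (Fin 2) ℝ)) ∣[k] (H : GL (Fin 2) ℝ) :=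
    slash_glp_mul k f 1 0 0 2 0 (-1) (N:ℝ) 0 _ _ _ _ (by norm_num) hdN hd2N'
      (by ring) (by ring) (by ring) (by ring)
  have e2' : f ∣[k] (glp 0 (-1) (2*(N:ℝ)) 0 hd2N' : GL (Fin 2) ℝ) = (f ∣[k] (H : GL (Fin 2) ℝ)) ∣[k] (glp 2 0 0 1 (by norm_num) : GL (Fin 2) ℝ) :=
    slash_glp_mul k f 0 (-1) (N:ℝ) 0 2 0 0 1 _ _ _ _ hdN (by norm_num) hd2N'
      (by ring) (by ring) (by ring) (by ring)
  have e3 : f ∣[k] (glp (N:ℝ) (-1) (2*(N:ℝ)) 0 hdNm : GL (Fin 2) ℝ) = (f ∣[k] (glp 1 1 0 2 (by norm_num) : GL (Fin 2) ℝ)) ∣[k] (H : GL (Fin 2) ℝ) :=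
    slash_glp_mul k f 1 1 0 2 0 (-1) (N:ℝ) 0 _ _ _ _ (by norm_num) hdN hdNm
      (by ring) (by ring) (by ring) (by ring)
  have e3' : f ∣[k] (glp (N:ℝ) (-1) (2*(N:ℝ)) 0 hdNm : GL (Fin 2) ℝ) = (f ∣[k] (H : GL (Fin 2) ℝ)) ∣[k] (glp 2 0 (-(N:ℝ)) 1 hdB : GL (Fin 2) ℝ) :=
    slash_glp_mul k f 0 (-1) (N:ℝ) 0 2 0 (-(N:ℝ)) 1 _ _ _ _ hdN hdB hdNm
      (by ring) (by ring) (by ring) (by ring)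
  -- slash the Hecke relation by H
  have big : (f ∣[k] (glp 2 0 0 1 (by norm_num) : GL (Fin 2) ℝ)) ∣[k] (H : GL (Fin 2) ℝ) + (f ∣[k] (glp 1 0 0 2 (by norm_num) : GL (Fin 2) ℝ)) ∣[k] (H : GL (Fin 2) ℝ)
      + (f ∣[k] (glp 1 1 0 2 (by norm_num) : GL (Fin 2) ℝ)) ∣[k] (H : GL (Fin 2) ℝ) = a₂ • (ε • f) := by
    rw [← SlashAction.add_slash, ← SlashAction.add_slash, hT2, smul_slash_glp, hH]
  rw [← e1, ← e2, ← e3, e1', e2', e3', hH, smul_slash_glp, smul_slash_glp,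
    smul_slash_glp] at big
  have big2 : ε • (f ∣[k] (glp 1 0 0 2 (by norm_num) : GL (Fin 2) ℝ) + f ∣[k] (glp 2 0 0 1 (by norm_num) : GL (Fin 2) ℝ)
      + f ∣[k] (glp 2 0 (-(N:ℝ)) 1 hdB : GL (Fin 2) ℝ)) = ε • (a₂ • f) := by
    rw [smul_add, smul_add, big, smul_comm]
  have big3 := smul_right_injective (ℍ → ℂ) hε0 big2
  have hBA : f ∣[k] (glp 2 0 (-(N:ℝ)) 1 hdB : GL (Fin 2) ℝ) = f ∣[k] (glp 1 1 0 2 (by norm_num) : GL (Fin 2) ℝ) := by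
    have h1 : f ∣[k] (glp 2 0 0 1 (by norm_num) : GL (Fin 2) ℝ) + f ∣[k] (glp 1 0 0 2 (by norm_num) : GL (Fin 2) ℝ)
        + f ∣[k] (glp 2 0 (-(N:ℝ)) 1 hdB : GL (Fin 2) ℝ) = a₂ • f := by
      rw [← big3]; abel
    have := h1.trans hT2.symm
    exact add_left_cancel this
  -- B = M * A₃ with M = [[2,-1],[-N,(N+1)/2]]
  have hdM : (0:ℝ) < (2:ℝ)*(((N:ℝ)+1)/2) - (-1)*(-(N:ℝ)) := by
    have : (2:ℝ)*(((N:ℝ)+1)/2) - (-1)*(-(N:ℝ)) = 1 := by field_simp; ring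
    rw [this]; norm_num
  have e4 : f ∣[k] (glp 2 0 (-(N:ℝ)) 1 hdB : GL (Fin 2) ℝ)
      = (f ∣[k] (glp 2 (-1) (-(N:ℝ)) (((N:ℝ)+1)/2) hdM : GL (Fin 2) ℝ)) ∣[k] (glp 1 1 0 2 (by norm_num) : GL (Fin 2) ℝ) :=
    slash_glp_mul k f 2 (-1) (-(N:ℝ)) (((N:ℝ)+1)/2) 1 1 0 2 _ _ _ _ hdM (by norm_num) hdB
      (by ring) (by ring) (by ring) (by field_simp; ring)
  rw [e4] at hBA
  -- cancel the A₃ slash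
  have hcancel : ∀ g h : ℍ → ℂ, g ∣[k] (glp 1 1 0 2 (by norm_num) : GL (Fin 2) ℝ) = h ∣[k] (glp 1 1 0 2 (by norm_num) : GL (Fin 2) ℝ)
      → g = h := by
    intro g h hgh
    have hinv : ∀ u : ℍ → ℂ, (u ∣[k] (glp 1 1 0 2 (by norm_num) : GL (Fin 2) ℝ)) ∣[k] (glp 1 (-1/2) 0 (1/2) (by norm_num) : GL (Fin 2) ℝ) = u := by
      intro u
      rw [← SlashAction.slash_mul, ← Subgroup.coe_mul, glp_mul 1 1 0 2 1 (-1/2) 0 (1/2) (by norm_num) (by norm_num) (by norm_num)]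
      rw [show glp (1*1+1*0) (1*(-1/2)+1*(1/2)) (0*1+2*0) (0*(-1/2)+2*(1/2)) (by norm_num) = 1 from
        (glp_congr (by norm_num) (by norm_num) (by norm_num) (by norm_num)).trans glp_one]
      exact SlashAction.slash_one k u
    rw [← hinv g, ← hinv h, hgh]
  have hM := hcancel _ _ hBA
  exact toQQ N k f 1 (-1) (-1) _ _ _ _ hdM (by norm_num) (by norm_num) (by push_cast; ring)
    (by push_cast; field_simp) hM


lemma parity_aux {s t A B : ℤ} (n : ℕ) (hn : 1 ≤ n) (hA : ¬ Even A) (hB : ¬ Even B) :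
    Even (s*B + t*A + 2^n*(s*t)) ↔ (Even s ↔ Even t) := by
  have h2 : Even ((2:ℤ)^n*(s*t)) :=
    ⟨2^(n-1)*(s*t), by rw [show (2:ℤ)^n = 2*2^(n-1) by
      rw [← pow_succ']; congr 1; omega]; ring⟩
  rw [Int.even_add, iff_true_intro h2, iff_true, Int.even_add, Int.even_mul, Int.even_mul]
  tauto

lemma exists_rep (n : ℕ) (hn : 1 ≤ n) (α : ℤ) (hodd : Odd α) :
    ∃ α' : ℤ, Odd α' ∧ 2*|α'| ≤ 2^n ∧ (2:ℤ)^n ∣ α - α' := by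
  set P : ℤ := 2^n with hP
  have hP0 : 0 < P := by positivity
  set r : ℤ := α % P with hr
  have hr0 : 0 ≤ r := Int.emod_nonneg α (ne_of_gt hP0)
  have hrP : r < P := Int.emod_lt_of_pos α hP0
  have hsub : α - r = P * (α / P) := by
    have := Int.mul_ediv_add_emod α P
    linarith
  by_cases hcase : 2*r ≤ P
  · refine ⟨r, ?_, ?_, ⟨α / P, hsub⟩⟩
    · -- odd
      have h2 : (2:ℤ) ∣ α - r := dvd_trans (dvd_pow_self 2 (by omega : n ≠ 0)) ⟨α / P, hsub⟩
      have hα1 : α % 2 = 1 := Int.odd_iff.mp hodd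
      rw [Int.odd_iff]
      omega
    · rw [abs_of_nonneg hr0]; exact hcase
  · refine ⟨r - P, ?_, ?_, ⟨α / P + 1, by rw [mul_add, ← hsub]; ring⟩⟩
    · have h2 : (2:ℤ) ∣ α - (r - P) := dvd_trans (dvd_pow_self 2 (by omega : n ≠ 0))
        ⟨α / P + 1, by rw [mul_add, ← hsub]; ring⟩
      have hα1 : α % 2 = 1 := Int.odd_iff.mp hodd
      rw [Int.odd_iff]
      omega
    · rw [abs_of_nonpos (by omega)]; omega

section Main
variable {N : ℕ} {k : ℤ} {f : ℍ → ℂ} {ε a₂ : ℂ}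

lemma mainQ (hN : (0:ℝ) < N) (hNodd : Odd N) (hε0 : ε ≠ 0)
    (hT : f ∣[k] (glp 1 1 0 1 (by norm_num) : GL (Fin 2) ℝ) = f)
    (hH : f ∣[k] (glp 0 (-1) (N:ℝ) 0 (by simpa using hN) : GL (Fin 2) ℝ) = ε • f)
    (hT2 : f ∣[k] (glp 2 0 0 1 (by norm_num) : GL (Fin 2) ℝ) + f ∣[k] (glp 1 0 0 2 (by norm_num) : GL (Fin 2) ℝ)
        + f ∣[k] (glp 1 1 0 2 (by norm_num) : GL (Fin 2) ℝ) = a₂ • f)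
    (hPair : PairingHyp N k f)
    (n : ℕ) (hn : 1 ≤ n) :
    ∀ α β : ℤ, Odd α → Odd β → ((2:ℤ)^n ∣ α * β * N + 1) → QQ N k f n α β := by
  have hNZodd : Odd ((N:ℤ)) := by exact_mod_cast hNodd
  have hNe : ¬ Even ((N:ℤ)) := by rw [Int.even_iff]; have := Int.odd_iff.mp hNZodd; omega
  induction n, hn using Nat.le_induction with
  | base =>
      intro α β hα hβ _
      refine QQ_cong hN hε0 hT hH ?_ ?_ (QQ_base hN hε0 hH hT2)
      · obtain ⟨a, ha⟩ := hα; exact ⟨a+1, by omega⟩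
      · obtain ⟨b, hb⟩ := hβ; exact ⟨b+1, by omega⟩
  | succ n hn IH =>
      intro α β hα hβ hdvd
      obtain ⟨α', hα'odd, hα'bd, hα'dvd⟩ := exists_rep n hn α hα
      obtain ⟨β', hβ'odd, hβ'bd, hβ'dvd⟩ := exists_rep n hn β hβ
      have hα'e : ¬ Even α' := by rw [Int.even_iff]; have := Int.odd_iff.mp hα'odd; omega
      have hβ'e : ¬ Even β' := by rw [Int.even_iff]; have := Int.odd_iff.mp hβ'odd; omega
      obtain ⟨s, hs⟩ := hα'dvd
      obtain ⟨t, ht⟩ := hβ'dvd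
      set E : ℤ := s*β' + t*α' + 2^n*(s*t) with hE
      have hkey : α*β*(N:ℤ) + 1 = (α'*β'*(N:ℤ) + 1) + 2^n*((N:ℤ)*E) := by
        rw [show α = α' + 2^n*s by linarith, show β = β' + 2^n*t by linarith, hE]; ring
      have hdvdn : (2:ℤ)^n ∣ α * β * N + 1 := dvd_trans (pow_dvd_pow 2 (by omega)) hdvd
      have hdvd' : (2:ℤ)^n ∣ α' * β' * N + 1 := by
        have h1 : (2:ℤ)^n ∣ 2^n*((N:ℤ)*E) := Dvd.intro _ rfl
        have := dvd_sub hdvdn h1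
        rw [hkey] at this
        simpa using this
      have hq : QQ N k f n α' β' := IH α' β' hα'odd hβ'odd hdvd'
      have hp := hPair n α' β' hn hα'odd hβ'odd hdvd' hα'bd hβ'bd hq
      have hEpar : Even E ↔ (Even s ↔ Even t) := by
        rw [hE]; exact parity_aux n hn hα'e hβ'e
      have hPS : (2:ℤ)^(n+1) = 2^n*2 := pow_succ 2 n
      by_cases hc : (2:ℤ)^(n+1) ∣ α' * β' * N + 1
      · obtain ⟨q1, q2⟩ := hp.1 hc
        have q1' : QQ N k f (n+1) α' β' := q1
        have q2' : QQ N k f (n+1) (α'-2^n) (β'-2^n) :=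
          toQQ N k f (n+1) (α'-2^n) (β'-2^n) _ _ _ _ _ rfl (by push_cast; ring)
            (by push_cast; ring) (by push_cast; ring) q2
        have hEeven : Even E := by
          have d1 : (2:ℤ)^n*2 ∣ 2^n*((N:ℤ)*E) := by
            rw [← hPS]
            have := dvd_sub hdvd hc
            rw [hkey] at this
            simpa using this
          have d2 : (2:ℤ) ∣ (N:ℤ)*E := (mul_dvd_mul_iff_left (a := (2:ℤ)^n)
            (pow_ne_zero n two_ne_zero)).mp d1
          obtain ⟨w2, hw2⟩ := d2
          have : Even ((N:ℤ)*E) := ⟨w2, by omega⟩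
          rw [Int.even_mul] at this
          exact this.resolve_left hNe
        have hst : Even s ↔ Even t := hEpar.mp hEeven
        by_cases hs2 : Even s
        · have ht2' := hst.mp hs2
          obtain ⟨u, hu⟩ := hs2
          obtain ⟨v, hv⟩ := ht2'
          refine QQ_cong hN hε0 hT hH ⟨u, ?_⟩ ⟨v, ?_⟩ q1'
          · rw [hPS, hs, hu]; ring
          · rw [hPS, ht, hv]; ring
        · have ht2 : ¬ Even t := fun h => hs2 (hst.mpr h)
          obtain ⟨u, hu⟩ : ∃ u, s = 2*u+1 := ⟨s/2, by rw [Int.even_iff] at hs2; omega⟩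
          obtain ⟨v, hv⟩ : ∃ v, t = 2*v+1 := ⟨t/2, by rw [Int.even_iff] at ht2; omega⟩
          refine QQ_cong hN hε0 hT hH ⟨u+1, ?_⟩ ⟨v+1, ?_⟩ q2'
          · rw [hPS, show α - (α' - 2^n) = 2^n*s + 2^n by linarith, hu]; ring
          · rw [hPS, show β - (β' - 2^n) = 2^n*t + 2^n by linarith, hv]; ring
      · obtain ⟨q1, q2⟩ := hp.2 hc
        have q1' : QQ N k f (n+1) (α'-2^n) β' :=
          toQQ N k f (n+1) (α'-2^n) β' _ _ _ _ _ rfl (by push_cast; ring)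
            (by push_cast; ring) (by push_cast; ring) q1
        have q2' : QQ N k f (n+1) α' (β'-2^n) :=
          toQQ N k f (n+1) α' (β'-2^n) _ _ _ _ _ rfl (by push_cast; ring)
            (by push_cast; ring) (by push_cast; ring) q2
        obtain ⟨u, hu⟩ := hdvd'
        have huodd : ¬ Even u := by
          intro ⟨w, hw⟩
          exact hc ⟨w, by rw [hu, hw, hPS]; ring⟩
        have hEodd : ¬ Even E := by
          have d1 : (2:ℤ)^n*2 ∣ 2^n*(u + (N:ℤ)*E) := by
            rw [← hPS]
            have h := hdvd
            rw [hkey, hu] at h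
            rw [mul_add]
            exact h
          have d2 : (2:ℤ) ∣ u + (N:ℤ)*E := (mul_dvd_mul_iff_left (a := (2:ℤ)^n)
            (pow_ne_zero n two_ne_zero)).mp d1
          obtain ⟨w2, hw2⟩ := d2
          have hev : Even (u + (N:ℤ)*E) := ⟨w2, by omega⟩
          rw [Int.even_add, Int.even_mul] at hev
          exact fun h => huodd (hev.mpr (Or.inr h))
        have hst : ¬ (Even s ↔ Even t) := fun h => hEodd (hEpar.mpr h)
        by_cases hs2 : Even s
        · have ht2 : ¬ Even t := fun h => hst ⟨fun _ => h, fun _ => hs2⟩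
          obtain ⟨w, hw⟩ := hs2
          obtain ⟨v, hv⟩ : ∃ v, t = 2*v+1 := ⟨t/2, by rw [Int.even_iff] at ht2; omega⟩
          refine QQ_cong hN hε0 hT hH ⟨w, ?_⟩ ⟨v+1, ?_⟩ q2'
          · rw [hPS, hs, hw]; ring
          · rw [hPS, show β - (β' - 2^n) = 2^n*t + 2^n by linarith, hv]; ring
        · have ht2 : Even t := by
            by_contra h
            exact hst ⟨fun h' => absurd h' hs2, fun h' => absurd h' h⟩
          obtain ⟨u2, hu2⟩ : ∃ u2, s = 2*u2+1 := ⟨s/2, by rw [Int.even_iff] at hs2; omega⟩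
          obtain ⟨v, hv⟩ := ht2
          refine QQ_cong hN hε0 hT hH ⟨u2+1, ?_⟩ ⟨v, ?_⟩ q1'
          · rw [hPS, show α - (α' - 2^n) = 2^n*s + 2^n by linarith, hu2]; ring
          · rw [hPS, ht, hv]; ring

lemma sl_coe (γ : SL(2, ℤ))
    (h : 0 < ((γ : Matrix (Fin 2) (Fin 2) ℤ) 0 0 : ℝ) * ((γ : Matrix (Fin 2) (Fin 2) ℤ) 1 1 : ℝ)
      - ((γ : Matrix (Fin 2) (Fin 2) ℤ) 0 1 : ℝ) * ((γ : Matrix (Fin 2) (Fin 2) ℤ) 1 0 : ℝ)) :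
    (γ : GL (Fin 2) ℝ) = (glp _ _ _ _ h : GL (Fin 2) ℝ) := by
  apply Units.ext
  show ((γ : Matrix (Fin 2) (Fin 2) ℤ).map (Int.cast : ℤ → ℝ)) = _
  ext i j
  fin_cases i <;> fin_cases j <;> simp [Matrix.map_apply] <;> rfl

end Main
end G02aux


/-- Under the pairing hypothesis, if `f ∣[k] T = f`, `f ∣[k] H_N = ε • f` and `f ∣[k] T₂ = a₂ • f`,
then `f ∣[k] γ = f` for every `γ ∈ G_{0,2}(N)`. -/
theorem slash_invariant_of_G02 (N : ℕ) (hN : 0 < N) (hNodd : Odd N) (k : ℤ) (ε : ℂ)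
    (hε : ε = 1 ∨ ε = -1) (a₂ : ℂ) (f : ℍ → ℂ)
    (hT : f ∣[k] (glp 1 1 0 1 (by norm_num) : GL (Fin 2) ℝ) = f)
    (hH : f ∣[k] (glp 0 (-1) (N:ℝ) 0
        (by simpa using (by exact_mod_cast hN : (0:ℝ) < N)) : GL (Fin 2) ℝ) = ε • f)
    (hT2 : f ∣[k] (glp 2 0 0 1 (by norm_num) : GL (Fin 2) ℝ) + f ∣[k] (glp 1 0 0 2 (by norm_num) : GL (Fin 2) ℝ)
        + f ∣[k] (glp 1 1 0 2 (by norm_num) : GL (Fin 2) ℝ) = a₂ • f)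
    (hPair : PairingHyp N k f) :
    ∀ γ ∈ G02 N, f ∣[k] γ = f := by
  classical
  have hε0 : ε ≠ 0 := by rcases hε with h | h <;> simp [h]
  have hNR : (0:ℝ) < N := by exact_mod_cast hN
  intro γ hγ
  obtain ⟨hΓ, n, ha⟩ := hγ
  set A := (γ : Matrix (Fin 2) (Fin 2) ℤ) 0 0 with hA
  set B := (γ : Matrix (Fin 2) (Fin 2) ℤ) 0 1 with hB
  set C := (γ : Matrix (Fin 2) (Fin 2) ℤ) 1 0 with hC
  set D := (γ : Matrix (Fin 2) (Fin 2) ℤ) 1 1 with hD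
  have hdet : A * D - B * C = 1 := by
    have := γ.prop
    rw [Matrix.det_fin_two] at this
    exact this
  have hCdvd : (N:ℤ) ∣ C := by
    have h1 := CongruenceSubgroup.Gamma0_mem.mp hΓ
    exact (ZMod.intCast_zmod_eq_zero_iff_dvd _ N).mp h1
  obtain ⟨c, hc⟩ := hCdvd
  have hpos : 0 < (A:ℝ) * (D:ℝ) - (B:ℝ) * (C:ℝ) := by
    have : ((A:ℝ) * (D:ℝ) - (B:ℝ) * (C:ℝ)) = ((1:ℤ):ℝ) := by push_cast; exact_mod_cast
      (by exact_mod_cast hdet : ((A*D - B*C : ℤ):ℝ) = ((1:ℤ):ℝ))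
    rw [this]; norm_num
  rw [ModularForm.SL_slash, G02aux.sl_coe γ hpos]
  rcases Nat.eq_zero_or_pos n with hn0 | hn1
  · -- n = 0 : A = 1
    subst hn0
    have hA1 : A = 1 := by simpa using ha
    have hDZ : D = B * c * N + 1 := by
      have h1 := hdet
      rw [hA1, hc] at h1
      linear_combination h1
    refine G02aux.ofQQ N k f 0 B c _ _ _ _ hpos ?_ rfl ?_ ?_ (G02aux.QQ_zero hNR hε0 hT hH B c)
    · rw [hA1]; norm_num
    · rw [hc]; push_cast; ring
    · rw [hDZ]; push_cast; norm_num
  · -- n ≥ 1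
    have h1 : (2:ℤ)^n * D - B * ((N:ℤ) * c) = 1 := by rw [← ha, ← hc]; exact hdet
    have hsplit : (2:ℤ)^n = 2 * 2^(n-1) := by
      rw [← pow_succ']; congr 1; omega
    have hBCodd : Odd (B * ((N:ℤ) * c)) := by
      refine ⟨2^(n-1) * D - 1, ?_⟩
      have h2 : (2:ℤ)^n * D = 2 * (2^(n-1) * D) := by rw [hsplit]; ring
      linarith
    have hBodd : Odd B := (Int.odd_mul.mp hBCodd).1
    have hNcodd : Odd ((N:ℤ) * c) := (Int.odd_mul.mp hBCodd).2
    have hcodd : Odd c := (Int.odd_mul.mp hNcodd).2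
    have hdvd : (2:ℤ)^n ∣ B * c * (N:ℤ) + 1 := ⟨D, by linear_combination -h1⟩
    have hDZ : (2:ℤ)^n * D = B * c * (N:ℤ) + 1 := by linear_combination h1
    have hDR : ((2:ℝ))^n * (D:ℝ) = (B:ℝ) * (c:ℝ) * (N:ℝ) + 1 := by exact_mod_cast hDZ
    refine G02aux.ofQQ N k f n B c _ _ _ _ hpos ?_ rfl ?_ ?_
      (G02aux.mainQ hNR hNodd hε0 hT hH hT2 hPair n hn1 B c hBodd hcodd hdvd)
    · rw [ha]; push_cast; ring
    · rw [hc]; push_cast; ring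
    · have hne : ((2:ℝ)^n) ≠ 0 := by positivity
      field_simp
      linear_combination hDR
end

section
/- Let N be an odd positive integer and assume the weak Artin hypothesis. Then the subgroup of SL(2,ℤ) generated by the set G_{0,2}(N) equals Γ_{0,2}(N). -/
open Matrix CongruenceSubgroup
open scoped MatrixGroups

/-- `Γ_{0,2}(N)`: matrices in `Γ₀(N)` whose upper-left entry is congruent to a power of `2`
modulo `N`. -/
def Gamma02 (N : ℕ) : Set SL(2, ℤ) :=
  {γ | γ ∈ Gamma0 N ∧ ∃ j : ℕ, (γ : Matrix (Fin 2) (Fin 2) ℤ) 0 0 ≡ 2^j [ZMOD (N:ℤ)]}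

/-- The weak form of Artin's conjecture on primitive roots: if `gcd(d, bM) = 1` then
`b ≡ 2^n (mod d + mM)` for some integer `m` and some nonnegative integer `n`. -/
def WeakArtin : Prop :=
  ∀ b d M : ℤ, Int.gcd d (b * M) = 1 → ∃ (m : ℤ) (n : ℕ), b ≡ 2^n [ZMOD (d + m * M)]

namespace ClosureG02Aux

lemma odd_dvd (m : ℤ) (hm : Odd m) : m ∣ 2 ^ (Nat.totient m.natAbs) - 1 := by
  have hA : Odd m.natAbs := Int.natAbs_odd.mpr hm
  have hcop : Nat.Coprime 2 m.natAbs := Nat.coprime_two_left.mpr hA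
  have h1 : m.natAbs ∣ 2 ^ Nat.totient m.natAbs - 1 :=
    (Nat.modEq_iff_dvd' Nat.one_le_two_pow).mp (Nat.ModEq.pow_totient hcop).symm
  have h2 : (m.natAbs : ℤ) ∣ ((2 ^ Nat.totient m.natAbs - 1 : ℕ) : ℤ) :=
    Int.natCast_dvd_natCast.mpr h1
  rw [Nat.cast_sub Nat.one_le_two_pow] at h2
  push_cast at h2
  exact (Int.natAbs_dvd).mp (by exact_mod_cast h2)

lemma odd_dvd' (m : ℤ) (hm : Odd m) (k : ℕ) : m ∣ 2 ^ (Nat.totient m.natAbs * k) - 1 := by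
  refine (odd_dvd m hm).trans ?_
  simpa [pow_mul] using sub_dvd_pow_sub_pow ((2:ℤ) ^ Nat.totient m.natAbs) 1 k


def Tk (t : ℤ) : SL(2,ℤ) := ⟨!![1, t; 0, 1], by simp [Matrix.det_fin_two_of]⟩

def Lk (N : ℕ) (m : ℤ) : SL(2,ℤ) := ⟨!![1, 0; m*N, 1], by simp [Matrix.det_fin_two_of]⟩

lemma Tk_mem (N : ℕ) (t : ℤ) : Tk t ∈ G02 N := by
  refine ⟨Gamma0_mem.mpr ?_, 0, rfl⟩
  show ((0:ℤ) : ZMod N) = 0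
  simp

lemma Lk_mem (N : ℕ) (m : ℤ) : Lk N m ∈ G02 N := by
  refine ⟨Gamma0_mem.mpr ?_, 0, rfl⟩
  show (((m*N : ℤ)) : ZMod N) = 0
  push_cast
  simp

lemma conj_entries (x : SL(2,ℤ)) (t k₂ m : ℤ) (N : ℕ) :
    ((Tk t * x * Tk k₂ * Lk N m : SL(2,ℤ)) : Matrix (Fin 2) (Fin 2) ℤ)
      = !![(x 0 0 + t * x 1 0) + ((x 0 0 + t * x 1 0) * k₂ + (x 0 1 + t * x 1 1)) * (m*N),
           (x 0 0 + t * x 1 0) * k₂ + (x 0 1 + t * x 1 1);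
           x 1 0 + (x 1 0 * k₂ + x 1 1) * (m*N),
           x 1 0 * k₂ + x 1 1] := by
  have hx : (x : Matrix (Fin 2) (Fin 2) ℤ) = !![x 0 0, x 0 1; x 1 0, x 1 1] :=
    Matrix.eta_fin_two _
  rw [Matrix.SpecialLinearGroup.coe_mul, Matrix.SpecialLinearGroup.coe_mul,
    Matrix.SpecialLinearGroup.coe_mul]
  show !![1, t; 0, 1] * (x : Matrix (Fin 2) (Fin 2) ℤ) * !![1, k₂; 0, 1] * !![1, 0; m*(N:ℤ), 1] = _
  rw [hx, Matrix.mul_fin_two, Matrix.mul_fin_two, Matrix.mul_fin_two]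
  ext i j
  fin_cases i <;> fin_cases j <;> simp <;> ring

lemma isCoprime_two_of_odd (m : ℤ) (hm : Odd m) : IsCoprime m (2:ℤ) := by
  obtain ⟨k, rfl⟩ := hm
  exact ⟨1, -k, by ring⟩

theorem keylemma (N : ℕ) (hN : 0 < N) (hNodd : Odd N) (g : SL(2,ℤ)) (j : ℕ)
    (hc : (N:ℤ) ∣ g 1 0)
    (hodd : Odd (g 0 0))
    (hart : ∃ n : ℕ, g 0 1 ≡ 2^n [ZMOD (g 0 0)])
    (hj : g 0 0 ≡ 2^j [ZMOD (N:ℤ)]) :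
    g ∈ Subgroup.closure (G02 N) := by
  obtain ⟨n, hn⟩ := hart
  set α : ℤ := g 0 0 with hα
  set β : ℤ := g 0 1 with hβ
  set γ : ℤ := g 1 0 with hγ
  set δ : ℤ := g 1 1 with hδ
  have hdet : α * δ - β * γ = 1 := by
    have := g.2; rw [Matrix.det_fin_two] at this; exact this
  -- exponents
  obtain ⟨ψ, hψ⟩ : ∃ ψ, Nat.totient α.natAbs = ψ + 1 :=
    ⟨Nat.totient α.natAbs - 1, by
      have : 0 < Nat.totient α.natAbs := Nat.totient_pos.mpr
        (Int.natAbs_pos.mpr (by intro h; rw [h] at hodd; exact (Int.not_odd_iff_even.mpr Even.zero) hodd))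
      omega⟩
  obtain ⟨ε, hε⟩ : ∃ ε, Nat.totient N = ε + 1 :=
    ⟨Nat.totient N - 1, by have := Nat.totient_pos.mpr hN; omega⟩
  set s₁ : ℕ := n * ψ with hs₁
  set s₂ : ℕ := j + s₁ * ε with hs₂
  -- α ∣ 2^s₁ * β - 1
  have h6 : α ∣ 2^s₁ * β - 1 := by
    have h1 : α ∣ β - 2^n := (Int.ModEq.dvd hn.symm)
    have h2 : α ∣ 2 ^ (Nat.totient α.natAbs * n) - 1 := odd_dvd' α hodd n
    have := dvd_add (h1.mul_left (2^s₁)) h2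
    convert this using 1
    · rfl
    rw [hψ]; ring
  -- N ∣ α - 2^(s₁+s₂)
  have hNdvd : (N:ℤ) ∣ α - 2^(s₁ + s₂) := by
    have h1 : (N:ℤ) ∣ α - 2^j := Int.ModEq.dvd hj.symm
    have h2 : (N:ℤ) ∣ 2 ^ (Nat.totient N * s₁) - 1 := by
      have := odd_dvd' (N:ℤ) (by exact_mod_cast hNodd) s₁
      simpa using this
    have := dvd_sub h1 (h2.mul_left (2^j))
    convert this using 1
    · rfl
    rw [hε]; ring
  -- define c₁
  set c₁ : ℤ := (α - 2^(s₁ + s₂)) / N with hc₁def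
  have hc₁ : (N:ℤ) * c₁ = α - 2^(s₁ + s₂) := Int.mul_ediv_cancel' hNdvd
  -- d₁
  have hd : α ∣ 2^s₂ + β * ((N:ℤ)*c₁) := by
    have := dvd_sub (dvd_mul_left α β) (h6.mul_left (2^s₂))
    convert this using 1
    · rfl
    rw [hc₁]; ring
  set d₁ : ℤ := (2^s₂ + β * ((N:ℤ)*c₁)) / α with hd₁def
  have hd₁ : α * d₁ = 2^s₂ + β * ((N:ℤ)*c₁) := Int.mul_ediv_cancel' hd
  have hI : α * (2^s₁ * d₁ - 1) = ((N:ℤ)*c₁) * (2^s₁ * β - 1) := by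
    linear_combination (2^(s₁):ℤ) * hd₁ + hc₁
  have hcop : IsCoprime α ((N:ℤ)*c₁) := by
    have h2 : IsCoprime α ((2:ℤ)^(s₁+s₂)) := (isCoprime_two_of_odd α hodd).pow_right
    have h3 := (h2.neg_right).add_mul_left_right 1
    have h4 : α - 2^(s₁+s₂) = -(2:ℤ)^(s₁+s₂) + α * 1 := by ring
    rw [hc₁, h4]; exact h3
  have hbdvd : ((N:ℤ)*c₁) ∣ (2^s₁ * d₁ - 1) :=
    (hcop.symm).dvd_of_dvd_mul_left ⟨2^s₁ * β - 1, hI⟩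
  set b₁ : ℤ := (2^s₁ * d₁ - 1) / ((N:ℤ)*c₁) with hb₁def
  have hb₁ : ((N:ℤ)*c₁) * b₁ = 2^s₁ * d₁ - 1 := Int.mul_ediv_cancel' hbdvd
  set W₁ : SL(2,ℤ) := ⟨!![2^s₁, b₁; (N:ℤ)*c₁, d₁], by
    rw [Matrix.det_fin_two_of]; linear_combination -hb₁⟩ with hW₁def
  set W₂ : SL(2,ℤ) := ⟨!![α*d₁ - β*((N:ℤ)*c₁), -(α*b₁) + β*2^s₁;
      γ*d₁ - δ*((N:ℤ)*c₁), -(γ*b₁) + δ*2^s₁], by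
    rw [Matrix.det_fin_two_of]
    linear_combination (2^(s₁)*d₁ - (N:ℤ)*c₁*b₁) * hdet - hb₁⟩ with hW₂def
  have hW₁mem : W₁ ∈ G02 N := by
    constructor
    · rw [Gamma0_mem]
      show ((((N:ℤ)*c₁ : ℤ)) : ZMod N) = 0
      push_cast
      simp
    · exact ⟨s₁, rfl⟩
  have hW₂mem : W₂ ∈ G02 N := by
    constructor
    · rw [Gamma0_mem]
      show (((γ*d₁ - δ*((N:ℤ)*c₁) : ℤ)) : ZMod N) = 0
      rw [ZMod.intCast_zmod_eq_zero_iff_dvd]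
      exact dvd_sub (hc.mul_right d₁) ⟨c₁*δ, by ring⟩
    · exact ⟨s₂, by show α*d₁ - β*((N:ℤ)*c₁) = 2^s₂; linear_combination hd₁⟩
  have hgeq : g = W₂ * W₁ := by
    apply Subtype.ext
    show (g : Matrix (Fin 2) (Fin 2) ℤ) = _
    rw [Matrix.SpecialLinearGroup.coe_mul]
    ext i j
    fin_cases i <;> fin_cases j <;>
      simp [Matrix.mul_apply, Fin.sum_univ_two, hW₁def, hW₂def]
    · linear_combination α * hb₁
    · linear_combination β * hb₁
    · linear_combination γ * hb₁
    · linear_combination δ * hb₁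
  rw [hgeq]
  exact Subgroup.mul_mem _ (Subgroup.subset_closure hW₂mem) (Subgroup.subset_closure hW₁mem)

def Gamma02Subgroup (N : ℕ) (hN : 0 < N) (hNodd : Odd N) : Subgroup SL(2,ℤ) where
  carrier := Gamma02 N
  one_mem' := by
    refine ⟨Subgroup.one_mem _, 0, ?_⟩
    simp
  mul_mem' := by
    rintro A B ⟨hA0, j₁, hj₁⟩ ⟨hB0, j₂, hj₂⟩
    refine ⟨Subgroup.mul_mem _ hA0 hB0, j₁ + j₂, ?_⟩
    have hB10 : (N:ℤ) ∣ B 1 0 :=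
      (ZMod.intCast_zmod_eq_zero_iff_dvd _ _).mp (Gamma0_mem.mp hB0)
    have hz : A 0 1 * B 1 0 ≡ 0 [ZMOD (N:ℤ)] :=
      (Int.modEq_zero_iff_dvd).mpr (hB10.mul_left _)
    have := (hj₁.mul hj₂).add hz
    rw [add_zero, ← pow_add] at this
    simp only [Matrix.SpecialLinearGroup.coe_mul, Matrix.mul_apply, Fin.sum_univ_two]
    exact this
  inv_mem' := by
    rintro A ⟨hA0, j, hj⟩
    refine ⟨Subgroup.inv_mem _ hA0, ?_⟩
    obtain ⟨ε, hε⟩ : ∃ ε, Nat.totient N = ε + 1 :=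
      ⟨Nat.totient N - 1, by have := Nat.totient_pos.mpr hN; omega⟩
    refine ⟨j * ε, ?_⟩
    have hE : ((A⁻¹ : SL(2,ℤ)) : Matrix (Fin 2) (Fin 2) ℤ) 0 0 = A 1 1 := by
      rw [Matrix.SpecialLinearGroup.SL2_inv_expl]
      simp
    rw [hE]
    have hγ : (N:ℤ) ∣ A 1 0 :=
      (ZMod.intCast_zmod_eq_zero_iff_dvd _ _).mp (Gamma0_mem.mp hA0)
    have hdet : A 0 0 * A 1 1 - A 0 1 * A 1 0 = 1 := by
      have := A.2; rw [Matrix.det_fin_two] at this; exact this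
    have k1 : (N:ℤ) ∣ 1 - A 0 0 * A 1 1 := by
      have h : 1 - A 0 0 * A 1 1 = -(A 0 1 * A 1 0) := by linarith
      rw [h]
      exact dvd_neg.mpr (hγ.mul_left _)
    have k2 : (N:ℤ) ∣ A 0 0 - 2^j := by
      have h : A 0 0 - 2^j = -(2^j - A 0 0) := by ring
      rw [h]
      exact dvd_neg.mpr (Int.ModEq.dvd hj)
    have k3 : (N:ℤ) ∣ 2^(Nat.totient N * j) - 1 := by
      have := odd_dvd' (N:ℤ) (by exact_mod_cast hNodd) j
      simpa using this
    have final := dvd_add (k1.mul_left (2^(j*ε)))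
      (dvd_add (k2.mul_left (A 1 1 * 2^(j*ε))) (k3.mul_left (A 1 1)))
    refine Int.modEq_iff_dvd.mpr ?_
    convert final using 1
    · rfl
    rw [hε]; ring

end ClosureG02Aux

/-- Assuming the weak Artin hypothesis, the subgroup of `SL(2, ℤ)` generated by `G_{0,2}(N)`
equals `Γ_{0,2}(N)`. -/
theorem closure_G02_eq_Gamma02 (N : ℕ) (hN : 0 < N) (hNodd : Odd N) (hArtin : WeakArtin) :
    (Subgroup.closure (G02 N) : Set SL(2, ℤ)) = Gamma02 N := by
  apply Set.eq_of_subset_of_subset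
  · -- closure ⊆ Gamma02
    have hle : Subgroup.closure (G02 N) ≤ ClosureG02Aux.Gamma02Subgroup N hN hNodd := by
      rw [Subgroup.closure_le]
      rintro g ⟨h0, n, hn⟩
      exact ⟨h0, n, by rw [hn]⟩
    intro g hg
    exact hle hg
  · -- Gamma02 ⊆ closure
    rintro x ⟨hx0, j, hj⟩
    have hc : (N:ℤ) ∣ x 1 0 :=
      (ZMod.intCast_zmod_eq_zero_iff_dvd _ _).mp (Gamma0_mem.mp hx0)
    have hdet : x 0 0 * x 1 1 - x 0 1 * x 1 0 = 1 := by
      have := x.2; rw [Matrix.det_fin_two] at this; exact this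
    -- make the top-left entry odd
    set t : ℤ := if Even (x 0 0) then 1 else 0 with ht
    set a₂ : ℤ := x 0 0 + t * x 1 0 with ha₂
    set b₀ : ℤ := x 0 1 + t * x 1 1 with hb₀
    have ha₂odd : Odd a₂ := by
      by_cases hEa : Even (x 0 0)
      · have hcodd : Odd (x 1 0) := by
          rcases Int.even_or_odd (x 1 0) with hEc | hOc
          · exfalso
            have hEv : Even (x 0 0 * x 1 1 - x 0 1 * x 1 0) :=
              (hEa.mul_right _).sub (hEc.mul_left _)
            rw [hdet] at hEv
            simp at hEv
          · exact hOc
        rw [ha₂, ht, if_pos hEa, one_mul]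
        exact hEa.add_odd hcodd
      · rw [ha₂, ht, if_neg hEa, zero_mul, add_zero]
        exact Int.not_even_iff_odd.mp hEa
    -- make the top-right entry even
    set k₂ : ℤ := if Even b₀ then 0 else 1 with hk₂
    set b₂ : ℤ := a₂ * k₂ + b₀ with hb₂
    have hb₂even : Even b₂ := by
      by_cases hEb : Even b₀
      · rw [hb₂, hk₂, if_pos hEb, mul_zero, zero_add]; exact hEb
      · rw [hb₂, hk₂, if_neg hEb, mul_one]
        exact ha₂odd.add_odd (Int.not_even_iff_odd.mp hEb)
    -- coprimality for weak Artin
    have hcop1 : IsCoprime a₂ b₂ :=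
      ⟨x 1 0 * k₂ + x 1 1, -(x 1 0), by rw [ha₂, hb₂, hb₀]; linear_combination hdet⟩
    have hNa₂ : (N:ℤ) ∣ a₂ - 2^j := by
      have h1 : (N:ℤ) ∣ x 0 0 - 2^j := by
        have h : x 0 0 - 2^j = -(2^j - x 0 0) := by ring
        rw [h]; exact dvd_neg.mpr (Int.ModEq.dvd hj)
      have := dvd_add h1 (hc.mul_left t)
      convert this using 1
      · rfl
      rw [ha₂]; ring
    have hcopN : IsCoprime a₂ (N:ℤ) := by
      obtain ⟨z, hz⟩ := hNa₂
      have hN2 : IsCoprime ((N:ℤ)) ((2:ℤ)^j) :=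
        (ClosureG02Aux.isCoprime_two_of_odd (N:ℤ) (by exact_mod_cast hNodd)).pow_right
      have h3 := hN2.add_mul_left_right z
      have h4 : a₂ = 2^j + (N:ℤ) * z := by linarith
      rw [h4]
      exact h3.symm
    have hgcd : Int.gcd a₂ (b₂ * (b₂ * N)) = 1 :=
      Int.isCoprime_iff_gcd_eq_one.mp (hcop1.mul_right (hcop1.mul_right hcopN))
    obtain ⟨m, n, hmn⟩ := hArtin b₂ a₂ (b₂ * N) hgcd
    -- the transformed matrix
    set P : SL(2,ℤ) := ClosureG02Aux.Tk t * x * ClosureG02Aux.Tk k₂ * ClosureG02Aux.Lk N m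
      with hPdef
    have hPent := ClosureG02Aux.conj_entries x t k₂ m N
    rw [← hPdef] at hPent
    have hP00 : (P : Matrix (Fin 2) (Fin 2) ℤ) 0 0 = a₂ + b₂ * (m * N) := by
      rw [hPent]; simp [ha₂, hb₂, hb₀]
    have hP01 : (P : Matrix (Fin 2) (Fin 2) ℤ) 0 1 = b₂ := by
      rw [hPent]; simp [ha₂, hb₂, hb₀]
    have hP10 : (P : Matrix (Fin 2) (Fin 2) ℤ) 1 0 = x 1 0 + (x 1 0 * k₂ + x 1 1) * (m * N) := by
      rw [hPent]; simp
    -- P satisfies the hypotheses of the key lemma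
    have hPmem : P ∈ Subgroup.closure (G02 N) := by
      apply ClosureG02Aux.keylemma N hN hNodd P j
      · rw [hP10]
        exact dvd_add hc ⟨(x 1 0 * k₂ + x 1 1) * m, by ring⟩
      · rw [hP00]
        exact ha₂odd.add_even (hb₂even.mul_right _)
      · refine ⟨n, ?_⟩
        rw [hP01, hP00]
        have h : a₂ + b₂ * (m * N) = a₂ + m * (b₂ * N) := by ring
        rw [h]
        exact hmn
      · rw [hP00]
        have h5 : (N:ℤ) ∣ (a₂ + b₂ * (m * N)) - 2^j := by
          have := dvd_add hNa₂ (Dvd.intro _ rfl : (N:ℤ) ∣ (N:ℤ) * (b₂ * m))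
          convert this using 1
          · rfl
          ring
        exact (Int.modEq_iff_dvd.mpr (by
          have h6 : 2^j - (a₂ + b₂ * (m * N)) = -((a₂ + b₂ * (m * N)) - 2^j) := by ring
          rw [h6]; exact dvd_neg.mpr h5))
    -- unwind the moves
    have hxeq : x = (ClosureG02Aux.Tk t)⁻¹ * P * (ClosureG02Aux.Lk N m)⁻¹ *
        (ClosureG02Aux.Tk k₂)⁻¹ := by
      rw [hPdef]; group
    rw [hxeq]
    exact Subgroup.mul_mem _
      (Subgroup.mul_mem _
        (Subgroup.mul_mem _
          (Subgroup.inv_mem _ (Subgroup.subset_closure (ClosureG02Aux.Tk_mem N t))) hPmem)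
        (Subgroup.inv_mem _ (Subgroup.subset_closure (ClosureG02Aux.Lk_mem N m))))
      (Subgroup.inv_mem _ (Subgroup.subset_closure (ClosureG02Aux.Tk_mem N k₂)))
end

section
/- Let N be an odd positive integer, k an integer, ε ∈ {1, −1}, a₂ ∈ ℂ, and f : ℍ → ℂ. If f ∣[k] H_N = ε • f and f ∣[k] [[2,0],[0,1]] + f ∣[k] [[1,0],[0,2]] + f ∣[k] [[1,1],[0,2]] = a₂ • f, then f ∣[k] M₂ = f, where M₂ = [[2, −1], [−N, (N+1)/2]]. -/
open Matrix UpperHalfPlane Complex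
open scoped ModularForm MatrixGroups

lemma glp_mul_glp (a b c d a' b' c' d' x y z w : ℝ) (h : 0 < a * d - b * c)
    (h' : 0 < a' * d' - b' * c') (h2 : 0 < x * w - y * z)
    (hx : x = a * a' + b * c') (hy : y = a * b' + b * d')
    (hz : z = c * a' + d * c') (hw : w = c * b' + d * d') :
    glp a b c d h * glp a' b' c' d' h' = glp x y z w h2 := by
  subst hx hy hz hw
  apply Subtype.ext
  apply Units.ext
  show !![a, b; c, d] * !![a', b'; c', d'] = _
  rw [Matrix.mul_fin_two]
  rfl

/-- If `f ∣[k] H_N = ε • f` and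
`f ∣[k] [[2,0],[0,1]] + f ∣[k] [[1,0],[0,2]] + f ∣[k] [[1,1],[0,2]] = a₂ • f`,
then `f ∣[k] M₂ = f` where `M₂ = [[2, -1], [-N, (N+1)/2]]`. -/
theorem slash_M2_eq_self (N : ℕ) (hN : 0 < N) (hNodd : Odd N) (k : ℤ) (ε : ℂ)
    (hε : ε = 1 ∨ ε = -1) (a₂ : ℂ) (f : ℍ → ℂ)
    (hH : f ∣[k] (glp 0 (-1) (N:ℝ) 0
        (by simpa using (by exact_mod_cast hN : (0:ℝ) < N)) : GL (Fin 2) ℝ) = ε • f)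
    (hT2 : f ∣[k] (glp 2 0 0 1 (by norm_num) : GL (Fin 2) ℝ) + f ∣[k] (glp 1 0 0 2 (by norm_num) : GL (Fin 2) ℝ)
        + f ∣[k] (glp 1 1 0 2 (by norm_num) : GL (Fin 2) ℝ) = a₂ • f) :
    f ∣[k] (glp 2 (-1) (-(N:ℝ)) (((N:ℝ) + 1)/2)
      (by
        have h : (2:ℝ) * (((N:ℝ) + 1)/2) - (-1) * (-(N:ℝ)) = 1 := by ring
        linarith) : GL (Fin 2) ℝ) = f := by
  have hN0 : (0:ℝ) < N := by exact_mod_cast hN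
  have hsm : ∀ (g : GL(2, ℝ)⁺) (c : ℂ) (h : ℍ → ℂ),
      (c • h) ∣[k] (g : GL (Fin 2) ℝ) = c • h ∣[k] (g : GL (Fin 2) ℝ) := by
    intro g c h
    have hg : 0 < ((g : GL (Fin 2) ℝ).det : ℝ) := g.2
    rw [ModularForm.smul_slash, UpperHalfPlane.σ, if_pos hg]
    rfl
  set H : GL(2, ℝ)⁺ := glp 0 (-1) (N:ℝ) 0 (by simpa using hN0) with hHdef
  set α : GL(2, ℝ)⁺ := glp 2 0 0 1 (by norm_num) with hαdef
  set β : GL(2, ℝ)⁺ := glp 1 0 0 2 (by norm_num) with hβdef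
  set γ : GL(2, ℝ)⁺ := glp 1 1 0 2 (by norm_num) with hγdef
  have hδpos : (0:ℝ) < 2 * 1 - 0 * (-(N:ℝ)) := by norm_num
  set δ : GL(2, ℝ)⁺ := glp 2 0 (-(N:ℝ)) 1 hδpos with hδdef
  have h2N : (0:ℝ) < 0 * 0 - (-2) * (N:ℝ) := by nlinarith
  have h2N' : (0:ℝ) < 0 * 0 - (-1) * (2 * (N:ℝ)) := by nlinarith
  have hNN : (0:ℝ) < (N:ℝ) * 0 - (-1) * (2 * (N:ℝ)) := by nlinarith
  -- matrix identities
  have eαH : α * H = H * β := by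
    rw [hαdef, hβdef, hHdef, glp_mul_glp 2 0 0 1 0 (-1) (N:ℝ) 0 0 (-2) (N:ℝ) 0 _ _ h2N,
      glp_mul_glp 0 (-1) (N:ℝ) 0 1 0 0 2 0 (-2) (N:ℝ) 0 _ _ h2N] <;> ring
  have eβH : β * H = H * α := by
    rw [hαdef, hβdef, hHdef,
      glp_mul_glp 1 0 0 2 0 (-1) (N:ℝ) 0 0 (-1) (2*(N:ℝ)) 0 _ _ h2N',
      glp_mul_glp 0 (-1) (N:ℝ) 0 2 0 0 1 0 (-1) (2*(N:ℝ)) 0 _ _ h2N'] <;> ring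
  have eγH : γ * H = H * δ := by
    rw [hγdef, hδdef, hHdef,
      glp_mul_glp 1 1 0 2 0 (-1) (N:ℝ) 0 (N:ℝ) (-1) (2*(N:ℝ)) 0 _ _ hNN,
      glp_mul_glp 0 (-1) (N:ℝ) 0 2 0 (-(N:ℝ)) 1 (N:ℝ) (-1) (2*(N:ℝ)) 0 _ _ hNN] <;> ring
  have cαH : (α : GL (Fin 2) ℝ) * H = H * β := by
    rw [← Subgroup.coe_mul, ← Subgroup.coe_mul, eαH]
  have cβH : (β : GL (Fin 2) ℝ) * H = H * α := by
    rw [← Subgroup.coe_mul, ← Subgroup.coe_mul, eβH]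
  have cγH : (γ : GL (Fin 2) ℝ) * H = H * δ := by
    rw [← Subgroup.coe_mul, ← Subgroup.coe_mul, eγH]
  -- slash hT2 by H
  have key := congrArg (fun g => g ∣[k] (H : GL (Fin 2) ℝ)) hT2
  simp only [SlashAction.add_slash, hsm] at key
  rw [← SlashAction.slash_mul, ← SlashAction.slash_mul, ← SlashAction.slash_mul,
    cαH, cβH, cγH, SlashAction.slash_mul, SlashAction.slash_mul, SlashAction.slash_mul,
    hH] at key
  simp only [hsm] at key
  have hεε : ε * ε = 1 := by rcases hε with h | h <;> rw [h] <;> norm_num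
  have key2 : f ∣[k] (β : GL (Fin 2) ℝ) + f ∣[k] (α : GL (Fin 2) ℝ) + f ∣[k] (δ : GL (Fin 2) ℝ) = a₂ • f := by
    have := congrArg (fun g => ε • g) key
    simp only [smul_add, smul_smul, hεε, one_smul] at this
    rwa [show ε * (a₂ * ε) = a₂ from by rw [mul_comm a₂ ε, ← mul_assoc, hεε, one_mul]] at this
  have hγδ : f ∣[k] (γ : GL (Fin 2) ℝ) = f ∣[k] (δ : GL (Fin 2) ℝ) := by
    have h1 : f ∣[k] (α : GL (Fin 2) ℝ) + f ∣[k] (β : GL (Fin 2) ℝ) + f ∣[k] (γ : GL (Fin 2) ℝ) = f ∣[k] (β : GL (Fin 2) ℝ) + f ∣[k] (α : GL (Fin 2) ℝ) + f ∣[k] (δ : GL (Fin 2) ℝ) := by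
      rw [hT2, key2]
    have h2 : f ∣[k] (β : GL (Fin 2) ℝ) + f ∣[k] (α : GL (Fin 2) ℝ) = f ∣[k] (α : GL (Fin 2) ℝ) + f ∣[k] (β : GL (Fin 2) ℝ) := add_comm _ _
    rw [h2] at h1
    exact add_left_cancel h1
  -- M₂ * γ = δ
  set M₂ : GL(2, ℝ)⁺ := glp 2 (-1) (-(N:ℝ)) (((N:ℝ) + 1)/2)
      (by
        have h : (2:ℝ) * (((N:ℝ) + 1)/2) - (-1) * (-(N:ℝ)) = 1 := by ring
        linarith) with hM₂def
  have eM₂γ : M₂ * γ = δ := by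
    rw [hM₂def, hγdef, hδdef,
      glp_mul_glp 2 (-1) (-(N:ℝ)) (((N:ℝ)+1)/2) 1 1 0 2 2 0 (-(N:ℝ)) 1 _ _ hδpos] <;> ring
  have hfinal : (f ∣[k] (M₂ : GL (Fin 2) ℝ)) ∣[k] (γ : GL (Fin 2) ℝ) = f ∣[k] (γ : GL (Fin 2) ℝ) := by
    rw [← SlashAction.slash_mul, ← Subgroup.coe_mul, eM₂γ, hγδ]
  have := congrArg (fun g => g ∣[k] (γ : GL (Fin 2) ℝ)⁻¹) hfinal
  simpa only [← SlashAction.slash_mul, mul_inv_cancel_right, mul_inv_cancel, SlashAction.slash_one] using this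
end

section
/- Let N be an odd positive integer, k an integer, ε ∈ {1, −1}, a₂ ∈ ℂ, and f : ℍ → ℂ. If f ∣[k] T = f, f ∣[k] H_N = ε • f, and f ∣[k] [[2,0],[0,1]] + f ∣[k] [[1,0],[0,2]] + f ∣[k] [[1,1],[0,2]] = a₂ • f, then f ∣[k] γ = f for all four matrices γ = [[2, δ₁],[δ₂ N, (δ₁δ₂N+1)/2]] with δ₁, δ₂ ∈ {1, −1}. -/
open Matrix UpperHalfPlane Complex
open scoped ModularForm MatrixGroups

set_option maxHeartbeats 1000000
set_option synthInstance.maxHeartbeats 1000000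

lemma pos_of_eq {x y : ℝ} (h : x = y) (hy : 0 < y) : 0 < x := h ▸ hy

lemma glp_mul {a b c d a' b' c' d' x y z w : ℝ} {h h' h''}
    (hx : a*a'+b*c' = x) (hy : a*b'+b*d' = y) (hz : c*a'+d*c' = z) (hw : c*b'+d*d' = w) :
    glp a b c d h * glp a' b' c' d' h' = glp x y z w h'' := by
  subst hx hy hz hw
  apply Subtype.ext
  apply Units.ext
  show (!![a,b;c,d] * !![a',b';c',d'] : Matrix (Fin 2) (Fin 2) ℝ) = _
  rw [Matrix.mul_fin_two]
  rfl

lemma glp_congr {a b c d a' b' c' d' : ℝ} (h h')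
    (ha : a = a') (hb : b = b') (hc : c = c') (hd : d = d') :
    glp a b c d h = glp a' b' c' d' h' := by subst ha hb hc hd; rfl

noncomputable instance : SlashAction ℤ GL(2, ℝ)⁺ (ℍ → ℂ) := monoidHomSlashAction (Subgroup.subtype _)

lemma slash_right_cancel {k : ℤ} {f g : ℍ → ℂ} {A : GL(2, ℝ)⁺}
    (h : f ∣[k] A = g ∣[k] A) : f = g := by
  have h2 := congrArg (fun t => t ∣[k] A⁻¹) h
  simpa only [← SlashAction.slash_mul, mul_inv_cancel, SlashAction.slash_one] using h2

lemma glp_smul_slash (k : ℤ) (A : GL(2, ℝ)⁺) (f : ℍ → ℂ) (c : ℂ) :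
    (c • f) ∣[k] A = c • f ∣[k] A := by
  show (c • f) ∣[k] (A : GL (Fin 2) ℝ) = c • f ∣[k] (A : GL (Fin 2) ℝ)
  rw [ModularForm.smul_slash, σ, if_pos ((Matrix.mem_glpos _).1 A.2), ContinuousAlgEquiv.refl_apply]

lemma coe_glp (a b c d : ℝ) (h) :
    ((glp a b c d h : GL (Fin 2) ℝ) : Matrix (Fin 2) (Fin 2) ℝ) = !![a,b;c,d] := rfl

lemma glp_point (a b c d : ℝ) (h) (x : ℍ) :
    (((glp a b c d h) • x : ℍ) : ℂ) = (((a:ℂ) * x + b) / ((c:ℂ)*x + d) : ℂ) := by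
  rw [show (glp a b c d h) • x = (glp a b c d h : GL (Fin 2) ℝ) • x from rfl,
    UpperHalfPlane.coe_smul_of_det_pos (glp a b c d h).2]
  simp [UpperHalfPlane.num, UpperHalfPlane.denom, coe_glp]

lemma denom_glp (a b c d : ℝ) (h) (x : ℍ) :
    UpperHalfPlane.denom (glp a b c d h) x = (c:ℂ)*x + d := by
  simp [UpperHalfPlane.denom, coe_glp]

lemma slash_S (k : ℤ) (f : ℍ → ℂ) (h) : f ∣[k] glp 2 0 0 2 h = ((2:ℂ)^(k-2)) • f := by
  funext x
  have hx : (glp 2 0 0 2 h) • x = x := by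
    apply UpperHalfPlane.ext
    rw [glp_point]
    have hd : ((0:ℝ):ℂ)*x + ((2:ℝ):ℂ) ≠ 0 := by
      push_cast; simpa using two_ne_zero
    field_simp
    push_cast; ring
  rw [show f ∣[k] glp 2 0 0 2 h = f ∣[k] (glp 2 0 0 2 h : GL (Fin 2) ℝ) from rfl, ModularForm.slash_def]
  show σ _ (f ((glp 2 0 0 2 h : GL (Fin 2) ℝ) • x)) * _ * _ = _
  rw [show (glp 2 0 0 2 h : GL (Fin 2) ℝ) • x = x from hx, denom_glp]
  have hdet : ((Matrix.GeneralLinearGroup.det (glp 2 0 0 2 h : GL (Fin 2) ℝ) : ℝˣ) : ℝ) = 4 := by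
    rw [Matrix.GeneralLinearGroup.val_det_apply, coe_glp, Matrix.det_fin_two_of]; norm_num
  rw [σ, if_pos (by rw [hdet]; norm_num), ContinuousAlgEquiv.refl_apply, hdet]
  push_cast
  rw [abs_of_pos (by norm_num : (0:ℝ) < 4)]
  push_cast
  have h2 : (2:ℂ) ≠ 0 := two_ne_zero
  rw [show (4:ℂ) = 2^(2:ℤ) by norm_num, ← _root_.zpow_mul]
  rw [show ((0:ℂ))*x + 2 = 2 by ring]
  rw [Pi.smul_apply, smul_eq_mul, mul_assoc, ← zpow_add₀ h2,
    show 2*(k-1) + -k = k-2 from by ring]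
  ring

/-- If `f ∣[k] T = f`, `f ∣[k] H_N = ε • f` and
`f ∣[k] [[2,0],[0,1]] + f ∣[k] [[1,0],[0,2]] + f ∣[k] [[1,1],[0,2]] = a₂ • f`,
then `f ∣[k] [[2, δ₁],[δ₂ N, (δ₁ δ₂ N + 1)/2]] = f` for all `δ₁, δ₂ ∈ {1, -1}`. -/
theorem slash_base_case (N : ℕ) (hN : 0 < N) (hNodd : Odd N) (k : ℤ) (ε : ℂ)
    (hε : ε = 1 ∨ ε = -1) (a₂ : ℂ) (f : ℍ → ℂ)
    (hT : f ∣[k] (glp 1 1 0 1 (by norm_num) : GL (Fin 2) ℝ) = f)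
    (hH : f ∣[k] (glp 0 (-1) (N:ℝ) 0
        (by simpa using (by exact_mod_cast hN : (0:ℝ) < N)) : GL (Fin 2) ℝ) = ε • f)
    (hT2 : f ∣[k] (glp 2 0 0 1 (by norm_num) : GL (Fin 2) ℝ) + f ∣[k] (glp 1 0 0 2 (by norm_num) : GL (Fin 2) ℝ)
        + f ∣[k] (glp 1 1 0 2 (by norm_num) : GL (Fin 2) ℝ) = a₂ • f) :
    ∀ δ₁ δ₂ : ℤ, (δ₁ = 1 ∨ δ₁ = -1) → (δ₂ = 1 ∨ δ₂ = -1) →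
      f ∣[k] (glp 2 (δ₁:ℝ) ((δ₂:ℝ) * (N:ℝ)) (((δ₁:ℝ) * (δ₂:ℝ) * (N:ℝ) + 1)/2)
        (by
          have h : (2:ℝ) * (((δ₁:ℝ) * (δ₂:ℝ) * (N:ℝ) + 1)/2)
              - (δ₁:ℝ) * ((δ₂:ℝ) * (N:ℝ)) = 1 := by ring
          linarith) : GL (Fin 2) ℝ) = f := by
  have hn : (0:ℝ) < ((N:ℝ)) := by exact_mod_cast hN
  have pW : (0:ℝ) < 0*0 - (-1)*((N:ℝ)) := by simpa using hn
  have pT : (0:ℝ) < 1*1 - 1*0 := by norm_num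
  have pA1 : (0:ℝ) < 2*1 - 0*0 := by norm_num
  have pA2 : (0:ℝ) < 1*2 - 0*0 := by norm_num
  have pA3 : (0:ℝ) < 1*2 - 1*0 := by norm_num
  have pS : (0:ℝ) < 2*2 - 0*0 := by norm_num
  have pD : (0:ℝ) < 2*1 - 0*(-((N:ℝ))) := by norm_num
  have pB1 : (0:ℝ) < 2*1 - 1*0 := by norm_num
  have pB2 : (0:ℝ) < 2*1 - (-1)*0 := by norm_num
  have pG11 : (0:ℝ) < 2*((((N:ℝ))+1)/2) - 1*((N:ℝ)) := pos_of_eq (by ring) one_pos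
  have pG1m : (0:ℝ) < 2*((1-((N:ℝ)))/2) - 1*(-((N:ℝ))) := pos_of_eq (by ring) one_pos
  have pGm1 : (0:ℝ) < 2*((1-((N:ℝ)))/2) - (-1)*((N:ℝ)) := pos_of_eq (by ring) one_pos
  have pGmm : (0:ℝ) < 2*((((N:ℝ))+1)/2) - (-1)*(-((N:ℝ))) := pos_of_eq (by ring) one_pos
  have pP : (0:ℝ) < (-((N:ℝ)))*(-((N:ℝ))) - (-2)*(((N:ℝ))*(1-((N:ℝ)))/2) := pos_of_eq (by ring) hn
  have pX1 : (0:ℝ) < 0*0 - (-2)*((N:ℝ)) := pos_of_eq (y := 2*((N:ℝ))) (by ring) (by linarith)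
  have pX2 : (0:ℝ) < 0*0 - (-1)*(2*((N:ℝ))) := pos_of_eq (y := 2*((N:ℝ))) (by ring) (by linarith)
  have pX3 : (0:ℝ) < 0*((N:ℝ)) - (-2)*((N:ℝ)) := pos_of_eq (y := 2*((N:ℝ))) (by ring) (by linarith)
  have pX4 : (0:ℝ) < 4*(1-((N:ℝ))) - 2*(-2*((N:ℝ))) := pos_of_eq (y := 4) (by ring) (by norm_num)
  have pX5 : (0:ℝ) < 2*2 - 2*0 := by norm_num
  have pX6 : (0:ℝ) < 4*(((N:ℝ))+1) - (-2)*(-2*((N:ℝ))) := pos_of_eq (y := 4) (by ring) (by norm_num)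
  have hT' : f ∣[k] glp 1 1 0 1 pT = f := hT
  have hH' : f ∣[k] glp 0 (-1) ((N:ℝ)) 0 pW = ε • f := hH
  have hT2' : f ∣[k] glp 2 0 0 1 pA1 + f ∣[k] glp 1 0 0 2 pA2 + f ∣[k] glp 1 1 0 2 pA3 = a₂ • f := hT2
  have hc : (2:ℂ)^(k-2) ≠ 0 := zpow_ne_zero _ two_ne_zero
  have hSs : f ∣[k] glp 2 0 0 2 pS = (2:ℂ)^(k-2) • f := slash_S k f pS
  have hA1W : (f ∣[k] glp 2 0 0 1 pA1) ∣[k] glp 0 (-1) ((N:ℝ)) 0 pW = ε • (f ∣[k] glp 1 0 0 2 pA2) := by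
    rw [← SlashAction.slash_mul,
      show glp 2 0 0 1 pA1 * glp 0 (-1) ((N:ℝ)) 0 pW = glp 0 (-2) ((N:ℝ)) 0 pX1 from glp_mul (by ring) (by ring) (by ring) (by ring),
      show glp 0 (-2) ((N:ℝ)) 0 pX1 = glp 0 (-1) ((N:ℝ)) 0 pW * glp 1 0 0 2 pA2 from (glp_mul (by ring) (by ring) (by ring) (by ring)).symm,
      SlashAction.slash_mul, hH', glp_smul_slash]
  have hA2W : (f ∣[k] glp 1 0 0 2 pA2) ∣[k] glp 0 (-1) ((N:ℝ)) 0 pW = ε • (f ∣[k] glp 2 0 0 1 pA1) := by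
    rw [← SlashAction.slash_mul,
      show glp 1 0 0 2 pA2 * glp 0 (-1) ((N:ℝ)) 0 pW = glp 0 (-1) (2*((N:ℝ))) 0 pX2 from glp_mul (by ring) (by ring) (by ring) (by ring),
      show glp 0 (-1) (2*((N:ℝ))) 0 pX2 = glp 0 (-1) ((N:ℝ)) 0 pW * glp 2 0 0 1 pA1 from (glp_mul (by ring) (by ring) (by ring) (by ring)).symm,
      SlashAction.slash_mul, hH', glp_smul_slash]
  have hsum : (f ∣[k] glp 2 0 0 1 pA1) ∣[k] glp 0 (-1) ((N:ℝ)) 0 pW + (f ∣[k] glp 1 0 0 2 pA2) ∣[k] glp 0 (-1) ((N:ℝ)) 0 pW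
      + (f ∣[k] glp 1 1 0 2 pA3) ∣[k] glp 0 (-1) ((N:ℝ)) 0 pW
      = ε • (f ∣[k] glp 2 0 0 1 pA1) + ε • (f ∣[k] glp 1 0 0 2 pA2) + ε • (f ∣[k] glp 1 1 0 2 pA3) := by
    rw [← SlashAction.add_slash, ← SlashAction.add_slash, hT2', glp_smul_slash, hH',
      smul_comm, ← hT2', smul_add, smul_add]
  have hA3W : (f ∣[k] glp 1 1 0 2 pA3) ∣[k] glp 0 (-1) ((N:ℝ)) 0 pW = ε • (f ∣[k] glp 1 1 0 2 pA3) := by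
    funext x
    have h1 := congrFun hsum x
    have h2 := congrFun hA1W x
    have h3 := congrFun hA2W x
    simp only [Pi.add_apply, Pi.smul_apply, smul_eq_mul] at h1 h2 h3 ⊢
    linear_combination h1 - h2 - h3
  have hD : f ∣[k] glp 2 0 (-((N:ℝ))) 1 pD = f ∣[k] glp 1 1 0 2 pA3 := by
    apply slash_right_cancel (A := glp 0 (-1) ((N:ℝ)) 0 pW)
    rw [← SlashAction.slash_mul,
      show glp 2 0 (-((N:ℝ))) 1 pD * glp 0 (-1) ((N:ℝ)) 0 pW = glp 0 (-2) ((N:ℝ)) ((N:ℝ)) pX3 from glp_mul (by ring) (by ring) (by ring) (by ring),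
      show glp 0 (-2) ((N:ℝ)) ((N:ℝ)) pX3 = glp 0 (-1) ((N:ℝ)) 0 pW * glp 1 1 0 2 pA3 from (glp_mul (by ring) (by ring) (by ring) (by ring)).symm,
      SlashAction.slash_mul, hH', glp_smul_slash]
    exact hA3W.symm
  have hG1m : f ∣[k] glp 2 1 (-((N:ℝ))) ((1-((N:ℝ)))/2) pG1m = f := by
    refine smul_right_injective (ℍ → ℂ) hc ?_
    calc (2:ℂ)^(k-2) • (f ∣[k] glp 2 1 (-((N:ℝ))) ((1-((N:ℝ)))/2) pG1m)
        = (f ∣[k] glp 2 0 0 2 pS) ∣[k] glp 2 1 (-((N:ℝ))) ((1-((N:ℝ)))/2) pG1m := by rw [hSs, glp_smul_slash]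
      _ = f ∣[k] (glp 2 0 0 2 pS * glp 2 1 (-((N:ℝ))) ((1-((N:ℝ)))/2) pG1m) := (SlashAction.slash_mul _ _ _ _).symm
      _ = f ∣[k] (glp 2 0 (-((N:ℝ))) 1 pD * glp 2 1 0 1 pB1) := by
          rw [show glp 2 0 0 2 pS * glp 2 1 (-((N:ℝ))) ((1-((N:ℝ)))/2) pG1m = glp 4 2 (-2*((N:ℝ))) (1-((N:ℝ))) pX4 from glp_mul (by ring) (by ring) (by ring) (by ring),
            show glp 4 2 (-2*((N:ℝ))) (1-((N:ℝ))) pX4 = glp 2 0 (-((N:ℝ))) 1 pD * glp 2 1 0 1 pB1 from (glp_mul (by ring) (by ring) (by ring) (by ring)).symm]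
      _ = (f ∣[k] glp 2 0 (-((N:ℝ))) 1 pD) ∣[k] glp 2 1 0 1 pB1 := SlashAction.slash_mul _ _ _ _
      _ = (f ∣[k] glp 1 1 0 2 pA3) ∣[k] glp 2 1 0 1 pB1 := by rw [hD]
      _ = f ∣[k] (glp 1 1 0 2 pA3 * glp 2 1 0 1 pB1) := (SlashAction.slash_mul _ _ _ _).symm
      _ = f ∣[k] (glp 2 0 0 2 pS * glp 1 1 0 1 pT) := by
          rw [show glp 1 1 0 2 pA3 * glp 2 1 0 1 pB1 = glp 2 2 0 2 pX5 from glp_mul (by ring) (by ring) (by ring) (by ring),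
            show glp 2 2 0 2 pX5 = glp 2 0 0 2 pS * glp 1 1 0 1 pT from (glp_mul (by ring) (by ring) (by ring) (by ring)).symm]
      _ = (f ∣[k] glp 2 0 0 2 pS) ∣[k] glp 1 1 0 1 pT := SlashAction.slash_mul _ _ _ _
      _ = (2:ℂ)^(k-2) • f := by rw [hSs, glp_smul_slash, hT']
  have hGmm : f ∣[k] glp 2 (-1) (-((N:ℝ))) ((((N:ℝ))+1)/2) pGmm = f := by
    refine smul_right_injective (ℍ → ℂ) hc ?_
    calc (2:ℂ)^(k-2) • (f ∣[k] glp 2 (-1) (-((N:ℝ))) ((((N:ℝ))+1)/2) pGmm)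
        = (f ∣[k] glp 2 0 0 2 pS) ∣[k] glp 2 (-1) (-((N:ℝ))) ((((N:ℝ))+1)/2) pGmm := by rw [hSs, glp_smul_slash]
      _ = f ∣[k] (glp 2 0 0 2 pS * glp 2 (-1) (-((N:ℝ))) ((((N:ℝ))+1)/2) pGmm) := (SlashAction.slash_mul _ _ _ _).symm
      _ = f ∣[k] (glp 2 0 (-((N:ℝ))) 1 pD * glp 2 (-1) 0 1 pB2) := by
          rw [show glp 2 0 0 2 pS * glp 2 (-1) (-((N:ℝ))) ((((N:ℝ))+1)/2) pGmm = glp 4 (-2) (-2*((N:ℝ))) (((N:ℝ))+1) pX6 from glp_mul (by ring) (by ring) (by ring) (by ring),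
            show glp 4 (-2) (-2*((N:ℝ))) (((N:ℝ))+1) pX6 = glp 2 0 (-((N:ℝ))) 1 pD * glp 2 (-1) 0 1 pB2 from (glp_mul (by ring) (by ring) (by ring) (by ring)).symm]
      _ = (f ∣[k] glp 2 0 (-((N:ℝ))) 1 pD) ∣[k] glp 2 (-1) 0 1 pB2 := SlashAction.slash_mul _ _ _ _
      _ = (f ∣[k] glp 1 1 0 2 pA3) ∣[k] glp 2 (-1) 0 1 pB2 := by rw [hD]
      _ = f ∣[k] (glp 1 1 0 2 pA3 * glp 2 (-1) 0 1 pB2) := (SlashAction.slash_mul _ _ _ _).symm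
      _ = f ∣[k] glp 2 0 0 2 pS := by rw [show glp 1 1 0 2 pA3 * glp 2 (-1) 0 1 pB2 = glp 2 0 0 2 pS from glp_mul (by ring) (by ring) (by ring) (by ring)]
      _ = (2:ℂ)^(k-2) • f := hSs
  have hPW : f ∣[k] glp (-((N:ℝ))) (-2) (((N:ℝ))*(1-((N:ℝ)))/2) (-((N:ℝ))) pP = f ∣[k] glp 0 (-1) ((N:ℝ)) 0 pW := by
    apply slash_right_cancel (A := glp 2 1 (-((N:ℝ))) ((1-((N:ℝ)))/2) pG1m)
    calc (f ∣[k] glp (-((N:ℝ))) (-2) (((N:ℝ))*(1-((N:ℝ)))/2) (-((N:ℝ))) pP) ∣[k] glp 2 1 (-((N:ℝ))) ((1-((N:ℝ)))/2) pG1m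
        = f ∣[k] (glp (-((N:ℝ))) (-2) (((N:ℝ))*(1-((N:ℝ)))/2) (-((N:ℝ))) pP * glp 2 1 (-((N:ℝ))) ((1-((N:ℝ)))/2) pG1m) := (SlashAction.slash_mul _ _ _ _).symm
      _ = f ∣[k] glp 0 (-1) ((N:ℝ)) 0 pW := by rw [show glp (-((N:ℝ))) (-2) (((N:ℝ))*(1-((N:ℝ)))/2) (-((N:ℝ))) pP * glp 2 1 (-((N:ℝ))) ((1-((N:ℝ)))/2) pG1m = glp 0 (-1) ((N:ℝ)) 0 pW from glp_mul (by ring) (by ring) (by ring) (by ring)]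
      _ = ε • f := hH'
      _ = ε • (f ∣[k] glp 2 1 (-((N:ℝ))) ((1-((N:ℝ)))/2) pG1m) := by rw [hG1m]
      _ = (ε • f) ∣[k] glp 2 1 (-((N:ℝ))) ((1-((N:ℝ)))/2) pG1m := (glp_smul_slash _ _ _ _).symm
      _ = (f ∣[k] glp 0 (-1) ((N:ℝ)) 0 pW) ∣[k] glp 2 1 (-((N:ℝ))) ((1-((N:ℝ)))/2) pG1m := by rw [hH']
  have hGm1 : f ∣[k] glp 2 (-1) ((N:ℝ)) ((1-((N:ℝ)))/2) pGm1 = f := by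
    apply slash_right_cancel (A := glp 0 (-1) ((N:ℝ)) 0 pW)
    calc (f ∣[k] glp 2 (-1) ((N:ℝ)) ((1-((N:ℝ)))/2) pGm1) ∣[k] glp 0 (-1) ((N:ℝ)) 0 pW
        = f ∣[k] (glp 2 (-1) ((N:ℝ)) ((1-((N:ℝ)))/2) pGm1 * glp 0 (-1) ((N:ℝ)) 0 pW) := (SlashAction.slash_mul _ _ _ _).symm
      _ = f ∣[k] glp (-((N:ℝ))) (-2) (((N:ℝ))*(1-((N:ℝ)))/2) (-((N:ℝ))) pP := by rw [show glp 2 (-1) ((N:ℝ)) ((1-((N:ℝ)))/2) pGm1 * glp 0 (-1) ((N:ℝ)) 0 pW = glp (-((N:ℝ))) (-2) (((N:ℝ))*(1-((N:ℝ)))/2) (-((N:ℝ))) pP from glp_mul (by ring) (by ring) (by ring) (by ring)]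
      _ = f ∣[k] glp 0 (-1) ((N:ℝ)) 0 pW := hPW
  have hG11 : f ∣[k] glp 2 1 ((N:ℝ)) ((((N:ℝ))+1)/2) pG11 = f := by
    calc f ∣[k] glp 2 1 ((N:ℝ)) ((((N:ℝ))+1)/2) pG11
        = f ∣[k] (glp 2 (-1) ((N:ℝ)) ((1-((N:ℝ)))/2) pGm1 * glp 1 1 0 1 pT) := by
          rw [show glp 2 (-1) ((N:ℝ)) ((1-((N:ℝ)))/2) pGm1 * glp 1 1 0 1 pT = glp 2 1 ((N:ℝ)) ((((N:ℝ))+1)/2) pG11 from glp_mul (by ring) (by ring) (by ring) (by ring)]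
      _ = (f ∣[k] glp 2 (-1) ((N:ℝ)) ((1-((N:ℝ)))/2) pGm1) ∣[k] glp 1 1 0 1 pT := SlashAction.slash_mul _ _ _ _
      _ = f ∣[k] glp 1 1 0 1 pT := by rw [hGm1]
      _ = f := hT'
  rintro δ₁ δ₂ (rfl | rfl) (rfl | rfl)
  · change f ∣[k] glp _ _ _ _ (by push_cast; linarith) = f
    convert hG11 using 2
    exact glp_congr _ _ (by norm_num) (by norm_num) (by push_cast; ring) (by push_cast; ring)
  · change f ∣[k] glp _ _ _ _ (by push_cast; linarith) = f
    convert hG1m using 2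
    exact glp_congr _ _ (by norm_num) (by norm_num) (by push_cast; ring) (by push_cast; ring)
  · change f ∣[k] glp _ _ _ _ (by push_cast; linarith) = f
    convert hGm1 using 2
    exact glp_congr _ _ (by norm_num) (by norm_num) (by push_cast; ring) (by push_cast; ring)
  · change f ∣[k] glp _ _ _ _ (by push_cast; linarith) = f
    convert hGmm using 2
    exact glp_congr _ _ (by norm_num) (by norm_num) (by push_cast; ring) (by push_cast; ring)
end

section
/- Let N be an odd positive integer, k an integer, ε ∈ {1, −1}, a₂ ∈ ℂ, and f : ℍ → ℂ. If f ∣[k] T = f, f ∣[k] H_N = ε • f, and f ∣[k] [[2,0],[0,1]] + f ∣[k] [[1,0],[0,2]] + f ∣[k] [[1,1],[0,2]] = a₂ • f, then f ∣[k] [[4, −2],[−N, (N+1)/2]] + f ∣[k] [[2−N, (N−1)/2],[−2N, N+1]] = f ∣[k] [[1,0],[0,2]] + f ∣[k] [[1,1],[0,2]]. -/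
open Matrix UpperHalfPlane Complex
open scoped ModularForm MatrixGroups

lemma glp_mul_s5 {a b c d a' b' c' d' A B C D : ℝ} {h : 0 < a*d - b*c}
    {h' : 0 < a'*d' - b'*c'} {hD : 0 < A*D - B*C}
    (hA : a*a' + b*c' = A) (hB : a*b' + b*d' = B) (hC : c*a' + d*c' = C)
    (hd : c*b' + d*d' = D) :
    glp a b c d h * glp a' b' c' d' h' = glp A B C D hD := by
  apply Subtype.ext
  apply Units.ext
  show (!![a,b;c,d] : Matrix (Fin 2) (Fin 2) ℝ) * !![a',b';c',d'] = !![A,B;C,D]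
  rw [Matrix.mul_fin_two, hA, hB, hC, hd]

lemma glp_one (h : (0:ℝ) < 1*1 - 0*0) : glp 1 0 0 1 h = 1 := by
  apply Subtype.ext; apply Units.ext
  show (!![(1:ℝ),0;0,1] : Matrix (Fin 2) (Fin 2) ℝ) = 1
  simp [Matrix.one_fin_two]

noncomputable instance glposSlashAction : SlashAction ℤ GL(2, ℝ)⁺ (ℍ → ℂ) :=
  monoidHomSlashAction (Matrix.GLPos (Fin 2) ℝ).subtype

lemma SlashAction.smul_slash (k : ℤ) (g : GL(2, ℝ)⁺) (f : ℍ → ℂ) (c : ℂ) :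
    (c • f) ∣[k] g = c • (f ∣[k] g) := by
  show (c • f) ∣[k] (g : GL (Fin 2) ℝ) = c • (f ∣[k] (g : GL (Fin 2) ℝ))
  have hg : 0 < ((g : GL (Fin 2) ℝ).det : ℝ) := by
    have := g.2
    rw [Matrix.mem_glpos] at this
    exact this
  rw [Matrix.GeneralLinearGroup.val_det_apply] at hg
  rw [ModularForm.smul_slash]
  simp [σ, hg]

/-- If `f ∣[k] T = f`, `f ∣[k] H_N = ε • f` and
`f ∣[k] [[2,0],[0,1]] + f ∣[k] [[1,0],[0,2]] + f ∣[k] [[1,1],[0,2]] = a₂ • f`, then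
`f ∣[k] [[4, -2],[-N, (N+1)/2]] + f ∣[k] [[2-N, (N-1)/2],[-2N, N+1]]
  = f ∣[k] [[1,0],[0,2]] + f ∣[k] [[1,1],[0,2]]`. -/
theorem slash_four_matrices (N : ℕ) (hN : 0 < N) (hNodd : Odd N) (k : ℤ) (ε : ℂ)
    (hε : ε = 1 ∨ ε = -1) (a₂ : ℂ) (f : ℍ → ℂ)
    (hT : f ∣[k] (glp 1 1 0 1 (by norm_num) : GL (Fin 2) ℝ) = f)
    (hH : f ∣[k] (glp 0 (-1) (N:ℝ) 0
        (by simpa using (by exact_mod_cast hN : (0:ℝ) < N)) : GL (Fin 2) ℝ) = ε • f)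
    (hT2 : f ∣[k] (glp 2 0 0 1 (by norm_num) : GL (Fin 2) ℝ) + f ∣[k] (glp 1 0 0 2 (by norm_num) : GL (Fin 2) ℝ)
        + f ∣[k] (glp 1 1 0 2 (by norm_num) : GL (Fin 2) ℝ) = a₂ • f) :
    f ∣[k] (glp 4 (-2) (-(N:ℝ)) (((N:ℝ) + 1)/2)
        (by
          have h : (4:ℝ) * (((N:ℝ) + 1)/2) - (-2) * (-(N:ℝ)) = 2 := by ring
          linarith) : GL (Fin 2) ℝ)
      + f ∣[k] (glp (2 - (N:ℝ)) (((N:ℝ) - 1)/2) (-2 * (N:ℝ)) ((N:ℝ) + 1)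
        (by
          have h : (2 - (N:ℝ)) * ((N:ℝ) + 1) - (((N:ℝ) - 1)/2) * (-2 * (N:ℝ)) = 2 := by ring
          linarith) : GL (Fin 2) ℝ)
      = f ∣[k] (glp 1 0 0 2 (by norm_num) : GL (Fin 2) ℝ) + f ∣[k] (glp 1 1 0 2 (by norm_num) : GL (Fin 2) ℝ) := by
  have hN0 : (0:ℝ) < (N:ℝ) := by exact_mod_cast hN
  have hNne : (N:ℝ) ≠ 0 := ne_of_gt hN0
  have hε2 : ε * ε = 1 := by rcases hε with h | h <;> rw [h] <;> norm_num
  let Tg : GL(2, ℝ)⁺ := glp 1 1 0 1 (by norm_num)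
  let Hg : GL(2, ℝ)⁺ := glp 0 (-1) (N:ℝ) 0 (by simpa using hN0)
  let A1 : GL(2, ℝ)⁺ := glp 2 0 0 1 (by norm_num)
  let A2 : GL(2, ℝ)⁺ := glp 1 0 0 2 (by norm_num)
  let Bg : GL(2, ℝ)⁺ := glp 1 1 0 2 (by norm_num)
  let Cg : GL(2, ℝ)⁺ := glp 2 0 (-(N:ℝ)) 1 (by norm_num)
  let G1 : GL(2, ℝ)⁺ := glp 2 (-1) (-(N:ℝ)) (((N:ℝ)+1)/2)
    (by nlinarith [sq_nonneg (N:ℝ)])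
  let Bi : GL(2, ℝ)⁺ := glp 1 (-1/2) 0 (1/2) (by norm_num)
  let D1 : GL(2, ℝ)⁺ := glp 2 (-1) 0 1 (by norm_num)
  let D2 : GL(2, ℝ)⁺ := glp 0 (1/(N:ℝ)) (-2) 1
    (by have : (0:ℝ)*1 - (1/(N:ℝ))*(-2) = 2/(N:ℝ) := by ring
        rw [this]; positivity)
  let D3 : GL(2, ℝ)⁺ := glp (-2) (1/(N:ℝ)+1) (-2) 1
    (by have : (-2:ℝ)*1 - (1/(N:ℝ)+1)*(-2) = 2/(N:ℝ) := by ring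
        rw [this]; positivity)
  let M1 : GL(2, ℝ)⁺ := glp 4 (-2) (-(N:ℝ)) (((N:ℝ) + 1)/2)
    (by have h : (4:ℝ) * (((N:ℝ) + 1)/2) - (-2) * (-(N:ℝ)) = 2 := by ring
        linarith)
  let M2 : GL(2, ℝ)⁺ := glp (2 - (N:ℝ)) (((N:ℝ) - 1)/2) (-2 * (N:ℝ)) ((N:ℝ) + 1)
    (by have h : (2 - (N:ℝ)) * ((N:ℝ) + 1) - (((N:ℝ) - 1)/2) * (-2 * (N:ℝ)) = 2 := by ring
        linarith)
  have hT' : f ∣[k] Tg = f := hT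
  have hH' : f ∣[k] Hg = ε • f := hH
  have hT2' : f ∣[k] A1 + f ∣[k] A2 + f ∣[k] Bg = a₂ • f := hT2
  have hTmul : ∀ D : GL(2, ℝ)⁺, f ∣[k] (Tg * D) = f ∣[k] D := by
    intro D; rw [SlashAction.slash_mul, hT']
  have hHmul : ∀ D : GL(2, ℝ)⁺, f ∣[k] (Hg * D) = ε • (f ∣[k] D) := by
    intro D; rw [SlashAction.slash_mul, hH', SlashAction.smul_slash]
  -- matrix identities
  have p2N : (0:ℝ) < 0*0 - (-2)*(N:ℝ) := by nlinarith
  have p2N' : (0:ℝ) < 0*0 - (-1)*(2*(N:ℝ)) := by nlinarith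
  have p2N'' : (0:ℝ) < (N:ℝ)*0 - (-1)*(2*(N:ℝ)) := by nlinarith
  have pAG : (0:ℝ) < 2*((N:ℝ)+1) - (-1)*(-2*(N:ℝ)) := by nlinarith
  have i1 : A1 * Hg = Hg * A2 := by
    trans glp 0 (-2) (N:ℝ) 0 p2N
    · exact glp_mul_s5 (by ring) (by ring) (by ring) (by ring)
    · exact (glp_mul_s5 (by ring) (by ring) (by ring) (by ring)).symm
  have i2 : A2 * Hg = Hg * A1 := by
    trans glp 0 (-1) (2*(N:ℝ)) 0 p2N'
    · exact glp_mul_s5 (by ring) (by ring) (by ring) (by ring)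
    · exact (glp_mul_s5 (by ring) (by ring) (by ring) (by ring)).symm
  have i3 : Bg * Hg = Hg * Cg := by
    trans glp (N:ℝ) (-1) (2*(N:ℝ)) 0 p2N''
    · exact glp_mul_s5 (by ring) (by ring) (by ring) (by ring)
    · exact (glp_mul_s5 (by ring) (by ring) (by ring) (by ring)).symm
  have i4 : Cg * Bi = G1 := glp_mul_s5 (by ring) (by ring) (by ring) (by ring)
  have i5 : Bg * Bi = 1 := by
    trans glp 1 0 0 1 (by norm_num)
    · exact glp_mul_s5 (by ring) (by ring) (by ring) (by ring)
    · exact glp_one _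
  have i6 : A1 * G1 = M1 := glp_mul_s5 (by ring) (by ring) (by ring) (by ring)
  have i7 : Bg * G1 = M2 := glp_mul_s5 (by ring) (by ring) (by ring) (by ring)
  have mm2 : Tg * D2 = D3 := glp_mul_s5 (by ring) (by ring) (by ring) (by ring)
  have mm3 : Hg * D2 = D1 := glp_mul_s5 (by ring) (by field_simp; ring) (by ring) (by field_simp; ring)
  have mm4 : Tg * D1 = A1 := glp_mul_s5 (by ring) (by ring) (by ring) (by ring)
  have mm5 : A2 * G1 = Hg * D3 := by
    trans glp 2 (-1) (-2*(N:ℝ)) ((N:ℝ)+1) pAG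
    · exact glp_mul_s5 (by ring) (by ring) (by ring) (by ring)
    · exact (glp_mul_s5 (by ring) (by ring) (by ring) (by field_simp; ring)).symm
  -- Step 1 : f ∣[k] Cg = f ∣[k] Bg
  have s2 : f ∣[k] Cg = f ∣[k] Bg := by
    have h0 := congrArg (fun g => g ∣[k] Hg) hT2'
    simp only [SlashAction.add_slash, SlashAction.smul_slash] at h0
    rw [← SlashAction.slash_mul, ← SlashAction.slash_mul, ← SlashAction.slash_mul,
      i1, i2, i3, hHmul, hHmul, hHmul, hH'] at h0
    -- h0 : ε • (f∣A2) + ε • (f∣A1) + ε • (f∣Cg) = a₂ • (ε • f)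
    have hεa : ε * (a₂ * ε) = a₂ := by
      rw [mul_comm a₂ ε, ← mul_assoc, hε2, one_mul]
    have h1 := congrArg (fun x => ε • x) h0
    simp only [smul_add, smul_smul, hε2, one_smul, hεa] at h1
    -- h1 : f∣A2 + f∣A1 + f∣Cg = a₂ • f
    have h2 : f ∣[k] A2 + f ∣[k] A1 + f ∣[k] Cg
        = f ∣[k] A2 + f ∣[k] A1 + f ∣[k] Bg := by
      rw [h1, ← hT2']; abel
    exact add_left_cancel h2
  -- Step 2 : f ∣[k] G1 = f
  have s3 : f ∣[k] G1 = f := by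
    have h0 := congrArg (fun g => g ∣[k] Bi) s2
    rw [← SlashAction.slash_mul, ← SlashAction.slash_mul, i4, i5,
      SlashAction.slash_one] at h0
    exact h0
  -- Step 3
  have e3 : f ∣[k] (A2 * G1) = f ∣[k] A1 := by
    have l1 : f ∣[k] (A2 * G1) = ε • (f ∣[k] D2) := by
      rw [mm5, hHmul, ← mm2, hTmul]
    have l2 : f ∣[k] A1 = ε • (f ∣[k] D2) := by
      rw [← mm4, hTmul, ← mm3, hHmul]
    rw [l1, l2]
  have h0 := congrArg (fun g => g ∣[k] G1) hT2'
  simp only [SlashAction.add_slash, SlashAction.smul_slash] at h0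
  rw [← SlashAction.slash_mul, ← SlashAction.slash_mul, ← SlashAction.slash_mul,
    i6, i7, e3, s3] at h0
  -- h0 : f∣M1 + f∣A1 + f∣M2 = a₂ • f
  have hfin : f ∣[k] M1 + f ∣[k] M2 = f ∣[k] A2 + f ∣[k] Bg := by
    have h := h0.trans hT2'.symm
    have h2 : f ∣[k] A1 + (f ∣[k] M1 + f ∣[k] M2)
        = f ∣[k] A1 + (f ∣[k] A2 + f ∣[k] Bg) := by
      calc f ∣[k] A1 + (f ∣[k] M1 + f ∣[k] M2)
          = f ∣[k] M1 + f ∣[k] A1 + f ∣[k] M2 := by abel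
        _ = f ∣[k] A1 + f ∣[k] A2 + f ∣[k] Bg := h
        _ = f ∣[k] A1 + (f ∣[k] A2 + f ∣[k] Bg) := by abel
    exact add_left_cancel h2
  exact hfin
end

section
/- Let N be an odd positive integer, n ≥ 1 an integer, and α, β integers such that 2^n ∣ αβN + 1. Then exactly one of the following holds: (i) 2^{n+1} divides both αβN + 1 and (α−2^n)(β−2^n)N + 1; or (ii) 2^{n+1} divides both (α−2^n)βN + 1 and α(β−2^n)N + 1. Equivalently, exactly one of the two pairs of matrices ([[2^{n+1}, α],[βN, (αβN+1)/2^{n+1}]], [[2^{n+1}, α−2^n],[(β−2^n)N, ((α−2^n)(β−2^n)N+1)/2^{n+1}]]) and ([[2^{n+1}, α−2^n],[βN, ((α−2^n)βN+1)/2^{n+1}]], [[2^{n+1}, α],[(β−2^n)N, (α(β−2^n)N+1)/2^{n+1}]]) consists of integer matrices (which then lie in Γ_0(N)). -/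
/-- If `N` is odd, `n ≥ 1` and `2^n ∣ αβN + 1`, then exactly one of the following holds:
(i) `2^(n+1)` divides both `αβN + 1` and `(α-2^n)(β-2^n)N + 1`; or
(ii) `2^(n+1)` divides both `(α-2^n)βN + 1` and `α(β-2^n)N + 1`. -/
theorem exactly_one_integer_pair (N : ℕ) (hN : 0 < N) (hNodd : Odd N)
    (n : ℕ) (hn : 1 ≤ n) (α β : ℤ) (h : ((2:ℤ)^n) ∣ α * β * N + 1) :
    Xor' (((2:ℤ)^(n+1)) ∣ α * β * N + 1 ∧
          ((2:ℤ)^(n+1)) ∣ (α - 2^n) * (β - 2^n) * N + 1)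
         (((2:ℤ)^(n+1)) ∣ (α - 2^n) * β * N + 1 ∧
          ((2:ℤ)^(n+1)) ∣ α * (β - 2^n) * N + 1) := by
  obtain ⟨k, hk⟩ := h
  have h2 : (2:ℤ) ∣ α * β * N + 1 :=
    (dvd_pow_self 2 (by omega : n ≠ 0)).trans ⟨k, hk⟩
  have hoddprod : Odd (α * β * (N:ℤ)) := Int.odd_iff.mpr (by omega)
  have hNZ : Odd ((N:ℤ)) := (Int.odd_coe_nat N).mpr hNodd
  have hα : Odd α := (Int.odd_mul.mp ((Int.odd_mul.mp hoddprod).1)).1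
  have hβ : Odd β := (Int.odd_mul.mp ((Int.odd_mul.mp hoddprod).1)).2
  obtain ⟨e, he⟩ := hβ.mul hNZ
  obtain ⟨f, hf⟩ := hα.mul hNZ
  obtain ⟨g, hg⟩ : ∃ g : ℤ, (2:ℤ)^n * N = 2 * g := by
    refine ⟨2^(n-1) * N, ?_⟩
    rw [← mul_assoc]
    congr 1
    rw [← pow_succ']
    congr 1
    omega
  have key : ∀ m : ℤ, ((2:ℤ)^(n+1) ∣ 2^n * m) ↔ 2 ∣ m := by
    intro m
    rw [pow_succ]
    exact mul_dvd_mul_iff_left (pow_ne_zero n two_ne_zero)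
  have eq2 : (α - 2^n) * β * N + 1 = 2^n * (k - β * N) := by linear_combination hk
  have eq3 : α * (β - 2^n) * N + 1 = 2^n * (k - α * N) := by linear_combination hk
  have eq4 : (α - 2^n) * (β - 2^n) * N + 1
      = 2^n * (k - α * N - β * N + 2^n * N) := by linear_combination hk
  rw [hk, eq2, eq3, eq4, key, key, key, key]
  rw [he, hf, hg]
  rw [Xor']
  rw [xor_def]
  omega
end

section
/- Let N be a positive integer and let ψ ∈ G_{0,2}(N). Then there exist integers k and ℓ such that W_N^k · ψ · T^ℓ ∈ L_{0,2}(N). Consequently G_{0,2}(N) is contained in the subgroup of SL(2,ℤ) generated by {T, W_N} ∪ L_{0,2}(N). -/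
open Matrix CongruenceSubgroup
open scoped MatrixGroups

/-- The matrix `T = [[1,1],[0,1]]` in `SL(2, ℤ)`. -/
def T : SL(2, ℤ) := ⟨!![1, 1; 0, 1], by norm_num [Matrix.det_fin_two_of]⟩

/-- The matrix `W_N = [[1,0],[N,1]]` in `SL(2, ℤ)`. -/
def W (N : ℕ) : SL(2, ℤ) := ⟨!![1, 0; (N:ℤ), 1], by norm_num [Matrix.det_fin_two_of]⟩

/-- `L_{0,2}(N)`: matrices `[[a,b],[c,d]]` in `G_{0,2}(N)` with `2|b| ≤ a` and `2|c| ≤ aN`. -/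
def L02 (N : ℕ) : Set SL(2, ℤ) :=
  {γ | γ ∈ G02 N ∧
    2 * |(γ : Matrix (Fin 2) (Fin 2) ℤ) 0 1| ≤ (γ : Matrix (Fin 2) (Fin 2) ℤ) 0 0 ∧
    2 * |(γ : Matrix (Fin 2) (Fin 2) ℤ) 1 0| ≤ (γ : Matrix (Fin 2) (Fin 2) ℤ) 0 0 * N}

lemma T_eq : T = ModularGroup.T := rfl

lemma coe_T_zpow' (l : ℤ) : ((T ^ l : SL(2, ℤ)) : Matrix (Fin 2) (Fin 2) ℤ) = !![1, l; 0, 1] := by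
  rw [T_eq]; exact ModularGroup.coe_T_zpow l

lemma W_inv (N : ℕ) : (W N)⁻¹ = ⟨!![1, 0; -(N:ℤ), 1], by norm_num [Matrix.det_fin_two_of]⟩ := by
  apply inv_eq_of_mul_eq_one_right
  ext i j
  show ((W N : Matrix (Fin 2) (Fin 2) ℤ) * !![1, 0; -(N:ℤ), 1]) i j = _
  fin_cases i <;> fin_cases j <;>
    simp [W, Matrix.mul_fin_two]

lemma coe_W_zpow (N : ℕ) (k : ℤ) :
    ((W N ^ k : SL(2, ℤ)) : Matrix (Fin 2) (Fin 2) ℤ) = !![1, 0; k * N, 1] := by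
  induction' k using Int.induction_on with k h k h
  · rw [zpow_zero]
    simp [Matrix.one_fin_two]
  · rw [_root_.zpow_add, zpow_one, Matrix.SpecialLinearGroup.coe_mul, h]
    show _ * (W N).1 = _
    rw [W, Matrix.mul_fin_two]
    congrm !![?_, ?_; ?_, ?_] <;> push_cast <;> ring
  · rw [_root_.zpow_sub, zpow_one, Matrix.SpecialLinearGroup.coe_mul, h, W_inv]
    show _ * (!![1, 0; -(N:ℤ), 1]) = _
    rw [Matrix.mul_fin_two]
    congrm !![?_, ?_; ?_, ?_] <;> push_cast <;> ring

private lemma choose_shift (a m x : ℤ) (ha : 0 < a) (hm : 0 < m) :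
    ∃ t : ℤ, 2 * |x + t * (a * m)| ≤ a * m := by
  have ham : 0 < a * m := mul_pos ha hm
  refine ⟨-((2 * x + a * m) / (2 * (a * m))), ?_⟩
  have hdm := Int.mul_ediv_add_emod (2 * x + a * m) (2 * (a * m))
  have h1 : 0 ≤ (2 * x + a * m) % (2 * (a * m)) :=
    Int.emod_nonneg _ (by positivity)
  have h2 : (2 * x + a * m) % (2 * (a * m)) < 2 * (a * m) :=
    Int.emod_lt_of_pos _ (by positivity)
  have key : 2 * (x + -((2 * x + a * m) / (2 * (a * m))) * (a * m)) =
      (2 * x + a * m) % (2 * (a * m)) - a * m := by linear_combination -hdm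
  rw [show (2:ℤ) * |x + -((2 * x + a * m) / (2 * (a * m))) * (a * m)|
      = |2 * (x + -((2 * x + a * m) / (2 * (a * m))) * (a * m))| from by
    rw [abs_mul, abs_two], key]
  rw [abs_le]
  omega

lemma key (N : ℕ) (hN : 0 < N) (ψ : SL(2, ℤ)) (hψ : ψ ∈ G02 N) :
    ∃ k l : ℤ, (W N)^k * ψ * T^l ∈ L02 N := by
  obtain ⟨hΓ, n, hn⟩ := hψ
  set a := (ψ : Matrix (Fin 2) (Fin 2) ℤ) 0 0 with ha_def
  set b := (ψ : Matrix (Fin 2) (Fin 2) ℤ) 0 1 with hb_def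
  set c := (ψ : Matrix (Fin 2) (Fin 2) ℤ) 1 0 with hc_def
  set d := (ψ : Matrix (Fin 2) (Fin 2) ℤ) 1 1 with hd_def
  have ha : 0 < a := by rw [hn]; positivity
  have hNdvd : (N : ℤ) ∣ c := by
    have := Gamma0_mem.mp hΓ
    exact (ZMod.intCast_zmod_eq_zero_iff_dvd _ _).mp this
  obtain ⟨l, hl⟩ := choose_shift a 1 b ha one_pos
  obtain ⟨k, hk⟩ := choose_shift a N c ha (by exact_mod_cast hN)
  rw [mul_one] at hl
  refine ⟨k, l, ?_⟩
  have hP : ((W N ^ k * ψ * T ^ l : SL(2, ℤ)) : Matrix (Fin 2) (Fin 2) ℤ) =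
      !![a, b + l * a; c + k * (a * N), (c + k * (a * N)) * l + (k * N * b + d)] := by
    rw [Matrix.SpecialLinearGroup.coe_mul, Matrix.SpecialLinearGroup.coe_mul,
      coe_W_zpow, coe_T_zpow', Matrix.eta_fin_two (ψ : Matrix (Fin 2) (Fin 2) ℤ),
      Matrix.mul_fin_two, Matrix.mul_fin_two]
    congrm !![?_, ?_; ?_, ?_] <;> ring
  refine ⟨⟨?_, n, ?_⟩, ?_, ?_⟩
  · rw [Gamma0_mem]
    show (((W N ^ k * ψ * T ^ l : SL(2, ℤ)) : Matrix (Fin 2) (Fin 2) ℤ) 1 0 : ZMod N) = 0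
    rw [hP]
    simp only [Matrix.cons_val', Matrix.cons_val_zero, Matrix.cons_val_one, Matrix.head_cons,
      Matrix.empty_val', Matrix.cons_val_fin_one, Matrix.head_fin_const, Matrix.of_apply]
    obtain ⟨c₀, hc0⟩ := hNdvd
    rw [hc0]
    push_cast
    ring_nf
    simp
  · rw [hP]; simpa using hn
  · rw [hP]
    simpa using hl
  · rw [hP]
    simpa using hk

/-- Every `ψ ∈ G_{0,2}(N)` can be moved into `L_{0,2}(N)` by powers of `W_N` and `T`;
consequently `G_{0,2}(N)` lies in the subgroup generated by `{T, W_N} ∪ L_{0,2}(N)`. -/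
theorem G02_subset_closure_L02 (N : ℕ) (hN : 0 < N) (ψ : SL(2, ℤ)) (hψ : ψ ∈ G02 N) :
    (∃ k l : ℤ, (W N)^k * ψ * T^l ∈ L02 N) ∧
    G02 N ⊆ (Subgroup.closure ({T, W N} ∪ L02 N) : Subgroup SL(2, ℤ)) := by
  constructor
  · exact key N hN ψ hψ
  · intro γ hγ
    obtain ⟨k, l, hL⟩ := key N hN γ hγ
    have hγ_eq : γ = (W N) ^ (-k) * ((W N) ^ k * γ * T ^ l) * T ^ (-l) := by
      group
    rw [hγ_eq]
    have hT : T ∈ Subgroup.closure ({T, W N} ∪ L02 N) :=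
      Subgroup.subset_closure (Set.mem_union_left _ (Set.mem_insert _ _))
    have hW : W N ∈ Subgroup.closure ({T, W N} ∪ L02 N) :=
      Subgroup.subset_closure (Set.mem_union_left _ (Set.mem_insert_of_mem _ rfl))
    have hLmem : (W N) ^ k * γ * T ^ l ∈ Subgroup.closure ({T, W N} ∪ L02 N) :=
      Subgroup.subset_closure (Set.mem_union_right _ hL)
    exact mul_mem (mul_mem (zpow_mem hW _) hLmem) (zpow_mem hT _)
end

section
/- Let N be an odd positive integer, n ≥ 2 an integer, and α, β odd integers with 2|α| ≤ 2^n, 2|β| ≤ 2^n, and 2^n ∣ αβN + 1, and set A = [[2^n, α],[βN, (αβN+1)/2^n]] ∈ SL(2,ℤ). Then there exist odd integers α₁, β₁ with 2|α₁| ≤ 2^{n−1}, 2|β₁| ≤ 2^{n−1}, α ≡ α₁ (mod 2^{n−1}), β ≡ β₁ (mod 2^{n−1}), together with exponents u, v ∈ {0, 1} and α' ∈ {α₁, α₁ − 2^{n−1}}, β' ∈ {β₁, β₁ − 2^{n−1}}, such that 2^n ∣ α'β'N + 1 and A = W_N^u · [[2^n, α'],[β'N, (α'β'N+1)/2^n]]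 · T^v. -/
open Matrix CongruenceSubgroup
open scoped MatrixGroups

lemma habs' (x y : ℤ) (h1 : -y ≤ 2*x) (h2 : 2*x ≤ y) : 2*|x| ≤ y := by
  rcases abs_cases x with ⟨h,_⟩|⟨h,_⟩ <;> omega

lemma pick' (n : ℕ) (hn : 2 ≤ n) (α : ℤ) (hα : Odd α) (hle : 2*|α| ≤ 2^n) :
    ∃ (α₁ : ℤ) (v : ℕ), Odd α₁ ∧ 2*|α₁| ≤ 2^(n-1) ∧ α ≡ α₁ [ZMOD ((2:ℤ)^(n-1))] ∧
      (v = 0 ∨ v = 1) ∧ (α - (v:ℤ)*2^n = α₁ ∨ α - (v:ℤ)*2^n = α₁ - 2^(n-1)) := by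
  have h1 : (2:ℤ)^n = 2 * 2^(n-1) := by
    rw [← pow_succ']; congr 1; omega
  have h2 : Even ((2:ℤ)^(n-1)) := by
    have h3 : (2:ℤ)^(n-1) = 2 * 2^(n-2) := by rw [← pow_succ']; congr 1; omega
    exact ⟨2^(n-2), by linarith⟩
  have hP : (0:ℤ) < 2^(n-1) := by positivity
  have h3 : -(2:ℤ)^n ≤ 2*α ∧ 2*α ≤ 2^n := by
    rcases abs_cases α with ⟨h,_⟩|⟨h,_⟩ <;> rw [h] at hle <;> constructor <;> linarith
  obtain ⟨h3l, h3r⟩ := h3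
  by_cases hc1 : (2:ℤ)^(n-1) < 2*α
  · refine ⟨α - 2^(n-1), 1, hα.sub_even h2, habs' _ _ (by linarith) (by linarith),
      Int.ModEq.symm (Int.modEq_iff_dvd.mpr ⟨1, by ring⟩), Or.inr rfl,
      Or.inr (by push_cast; linarith)⟩
  · by_cases hc2 : 2*α < -((2:ℤ)^(n-1))
    · refine ⟨α + 2^(n-1), 0, hα.add_even h2, habs' _ _ (by linarith) (by linarith),
        Int.ModEq.symm (Int.modEq_iff_dvd.mpr ⟨-1, by ring⟩), Or.inl rfl,
        Or.inr (by push_cast; ring)⟩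
    · push_neg at hc1 hc2
      exact ⟨α, 0, hα, habs' _ _ (by linarith) (by linarith), Int.ModEq.refl _,
        Or.inl rfl, Or.inl (by push_cast; ring)⟩

/-- Every matrix `A = [[2^n, α],[βN, (αβN+1)/2^n]]` of level `2^n` with small odd `α, β` arises,
up to multiplication by `T` and `W_N`, from one of the four matrices produced by the process at
level `2^(n-1)`. -/
theorem level_reduction (N : ℕ) (hN : 0 < N) (hNodd : Odd N) (n : ℕ) (hn : 2 ≤ n)
    (α β : ℤ) (hα : Odd α) (hβ : Odd β)
    (hαle : 2 * |α| ≤ 2^n) (hβle : 2 * |β| ≤ 2^n) (hdvd : ((2:ℤ)^n) ∣ α * β * N + 1)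
    (A : SL(2, ℤ))
    (hA : (A : Matrix (Fin 2) (Fin 2) ℤ) = !![2^n, α; β * N, (α * β * N + 1) / 2^n]) :
    ∃ α₁ β₁ : ℤ, Odd α₁ ∧ Odd β₁ ∧ 2 * |α₁| ≤ 2^(n-1) ∧ 2 * |β₁| ≤ 2^(n-1) ∧
      α ≡ α₁ [ZMOD ((2:ℤ)^(n-1))] ∧ β ≡ β₁ [ZMOD ((2:ℤ)^(n-1))] ∧
      ∃ u v : ℕ, (u = 0 ∨ u = 1) ∧ (v = 0 ∨ v = 1) ∧
        ∃ α' β' : ℤ, (α' = α₁ ∨ α' = α₁ - 2^(n-1)) ∧ (β' = β₁ ∨ β' = β₁ - 2^(n-1)) ∧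
          ((2:ℤ)^n) ∣ α' * β' * N + 1 ∧
          ∃ B : SL(2, ℤ),
            (B : Matrix (Fin 2) (Fin 2) ℤ) = !![2^n, α'; β' * N, (α' * β' * N + 1) / 2^n] ∧
            A = (W N)^u * B * T^v := by
  obtain ⟨α₁, v, hα₁odd, hα₁le, hα₁cong, hv, hα'⟩ := pick' n hn α hα hαle
  obtain ⟨β₁, u, hβ₁odd, hβ₁le, hβ₁cong, hu, hβ'⟩ := pick' n hn β hβ hβle
  obtain ⟨k, hk⟩ := hdvd
  have hpow : ((2:ℤ)^n) ≠ 0 := by positivity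
  have hdvd' : ((2:ℤ)^n) ∣ (α - (v:ℤ)*2^n) * (β - (u:ℤ)*2^n) * N + 1 :=
    ⟨k - ((u:ℤ)*α + (v:ℤ)*β - (u:ℤ)*(v:ℤ)*2^n)*N, by linear_combination hk⟩
  obtain ⟨K, hK⟩ := hdvd'
  have hKdiv : ((α - (v:ℤ)*2^n) * (β - (u:ℤ)*2^n) * N + 1) / 2^n = K := by
    rw [hK, Int.mul_ediv_cancel_left _ hpow]
  have hkdiv : (α * β * (N:ℤ) + 1) / 2^n = k := by
    rw [hk, Int.mul_ediv_cancel_left _ hpow]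
  refine ⟨α₁, β₁, hα₁odd, hβ₁odd, hα₁le, hβ₁le, hα₁cong, hβ₁cong, u, v, hu, hv,
    α - (v:ℤ)*2^n, β - (u:ℤ)*2^n, hα', hβ', ⟨K, hK⟩,
    ⟨!![2^n, α - (v:ℤ)*2^n; (β - (u:ℤ)*2^n) * N, K], by
      simp only [Matrix.det_fin_two_of]; linear_combination -hK⟩,
    by rw [hKdiv], ?_⟩
  have key : k = ((u:ℤ)*(α - (v:ℤ)*2^n) + (v:ℤ)*(β - (u:ℤ)*2^n) + (u:ℤ)*(v:ℤ)*2^n)*(N:ℤ) + K :=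
    mul_left_cancel₀ hpow (by linear_combination hK - hk)
  apply Subtype.ext
  rw [hA]
  erw [Matrix.SpecialLinearGroup.coe_mul, Matrix.SpecialLinearGroup.coe_mul,
    Matrix.SpecialLinearGroup.coe_pow, Matrix.SpecialLinearGroup.coe_pow]
  rcases hu with rfl | rfl <;> rcases hv with rfl | rfl <;>
    simp only [pow_zero, pow_one, mul_one, one_mul, Matrix.SpecialLinearGroup.coe_mul,
      Matrix.SpecialLinearGroup.coe_one, W, T, hkdiv] <;>
    ext i j <;> fin_cases i <;> fin_cases j <;>
    simp [Matrix.mul_apply, Fin.sum_univ_two] <;>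
    push_cast <;> first | ring1 | linear_combination key
end
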